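/- arXiv:1707.05892 — 6 statements merged into one kernel-verified Lean document; each statement's English description precedes it below -/
import Mathlib

section
/- (Karlsson–Margulis) Let (X,μ,f) be an ergodic measure-preserving system on a probability space and let (a_n) be a subadditive cocycle over f with each a_n integrable, whose exponent λ = lim_{n→∞} (1/n)∫a_n dμ satisfies λ > −∞. Then there exists a set E ⊆ X with μ(E) = 1 such that for each x ∈ E and each ε > 0 there is an integer L = L(x,ε) for which the set of integers n satisfying a_n(x) − a_{n−i}(f^i x) ≥ (λ − ε)·i for all integers i with L ≤ i ≤ n is infinite. -/
open MeasureTheory Filter Metric Real Topology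

/-- Deterministic "record" lemma. -/
theorem km_record (c h : ℕ → ℝ) (N : ℕ) (hc0 : c 0 = 0)
    (hstep : ∀ j, 1 ≤ j → j ≤ N → c j ≤ c (j - 1) + h j)
    (hh : ∀ j, 0 ≤ h j) :
    ∀ n ≤ N, c n ≤ ∑ j ∈ Finset.Icc 1 N, {j : ℕ | ∀ m ≤ j, c m ≤ c j}.indicator h j := by
  have hind : ∀ j, 0 ≤ {j : ℕ | ∀ m ≤ j, c m ≤ c j}.indicator h j := fun j =>
    Set.indicator_nonneg (fun j _ => hh j) j
  have main : ∀ n, n ≤ N → ∀ m ≤ n,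
      c m ≤ ∑ j ∈ Finset.Icc 1 n, {j : ℕ | ∀ m ≤ j, c m ≤ c j}.indicator h j := by
    intro n
    induction n with
    | zero => intro _ m hm; interval_cases m; simp [hc0]
    | succ n ih =>
      intro hn m hm
      have hnN : n ≤ N := Nat.le_of_succ_le hn
      have hpad : ∀ m ≤ n, c m ≤ ∑ j ∈ Finset.Icc 1 (n+1),
          {j : ℕ | ∀ m ≤ j, c m ≤ c j}.indicator h j := by
        intro m hm
        refine le_trans (ih hnN m hm) ?_
        exact Finset.sum_le_sum_of_subset_of_nonneg
          (Finset.Icc_subset_Icc_right (Nat.le_succ n)) (fun j _ _ => hind j)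
      rcases Nat.lt_or_ge m (n+1) with hm' | hm'
      · exact hpad m (Nat.lt_succ_iff.mp hm')
      · have hmeq : m = n + 1 := le_antisymm hm hm'
        subst hmeq
        by_cases hrec : ∃ m' ≤ n, c (n+1) ≤ c m'
        · obtain ⟨m', hm', hle⟩ := hrec
          exact le_trans hle (hpad m' hm')
        · push_neg at hrec
          have hrec' : (n+1) ∈ {j : ℕ | ∀ m ≤ j, c m ≤ c j} := by
            intro m hm
            rcases Nat.lt_or_ge m (n+1) with h1 | h1
            · exact le_of_lt (hrec m (Nat.lt_succ_iff.mp h1))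
            · have : m = n+1 := le_antisymm hm h1
              simp [this]
          have hsum : ∑ j ∈ Finset.Icc 1 (n+1), {j : ℕ | ∀ m ≤ j, c m ≤ c j}.indicator h j
              = (∑ j ∈ Finset.Icc 1 n, {j : ℕ | ∀ m ≤ j, c m ≤ c j}.indicator h j)
                + {j : ℕ | ∀ m ≤ j, c m ≤ c j}.indicator h (n+1) := by
            rw [← Finset.sum_Icc_succ_top (Nat.one_le_iff_ne_zero.mpr (Nat.succ_ne_zero n))]
          rw [hsum, Set.indicator_of_mem hrec']
          have h1 : c (n+1) ≤ c n + h (n+1) := by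
            have := hstep (n+1) (Nat.succ_le_succ (Nat.zero_le n)) hn
            simpa using this
          have h2 : c n ≤ ∑ j ∈ Finset.Icc 1 n, {j : ℕ | ∀ m ≤ j, c m ≤ c j}.indicator h j :=
            ih hnN n le_rfl
          linarith
  intro n hn
  refine le_trans (main n hn n le_rfl) ?_
  exact Finset.sum_le_sum_of_subset_of_nonneg
    (Finset.Icc_subset_Icc_right hn) (fun j _ _ => hind j)

theorem km_core {X : Type*} [MeasurableSpace X] (μ : Measure X) [IsProbabilityMeasure μ]
    (f : X → X) (hf : MeasurePreserving f μ μ)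
    (A : ℕ → X → ℝ) (hmeas : ∀ n, StronglyMeasurable (A n))
    (hA0 : ∀ x, A 0 x = 0)
    (hsub : ∀ k n : ℕ, ∀ᵐ x ∂μ, A (n + k) x ≤ A k x + A n (f^[k] x))
    (hint : ∀ n, Integrable (A n) μ)
    (ε : ℝ) (hε : 0 < ε)
    (hgrow : ∀ N : ℕ, ε * N ≤ ∫ x, A N x ∂μ) :
    μ (⋂ M : ℕ, ⋃ j : ℕ, ⋃ _ : M ≤ j, {x | ∀ m ≤ j, A m (f^[j - m] x) ≤ A j x}) ≠ 0 := by
  set Good : ℕ → Set X := fun j => {x | ∀ m ≤ j, A m (f^[j - m] x) ≤ A j x} with hGood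
  set φ : X → ℝ := fun x => max (A 1 x) 0 with hφ
  have hφnn : ∀ x, 0 ≤ φ x := fun x => le_max_right _ _
  have hφint : Integrable φ μ := (hint 1).pos_part
  have hGoodMeas : ∀ j, MeasurableSet (Good j) := by
    intro j
    have : Good j = ⋂ m : ℕ, ⋂ _ : m ≤ j, {x | A m (f^[j - m] x) ≤ A j x} := by
      ext x; simp [hGood, Set.mem_iInter]
    rw [this]
    refine MeasurableSet.iInter fun m => MeasurableSet.iInter fun _ => ?_
    exact measurableSet_le ((hmeas m).measurable.comp (hf.iterate (j - m)).measurable)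
      (hmeas j).measurable
  set I : ℕ → ℝ := fun j => ∫ x in Good j, φ x ∂μ with hI
  have hInn : ∀ j, 0 ≤ I j := fun j =>
    setIntegral_nonneg (hGoodMeas j) fun x _ => hφnn x
  -- integral of composition with iterates
  have hcomp : ∀ (k : ℕ) (g : X → ℝ), AEStronglyMeasurable g μ →
      ∫ x, g (f^[k] x) ∂μ = ∫ x, g x ∂μ := by
    intro k g hg
    have h1 : AEStronglyMeasurable g (Measure.map f^[k] μ) := by
      rwa [(hf.iterate k).map_eq]
    rw [← integral_map (hf.iterate k).measurable.aemeasurable h1, (hf.iterate k).map_eq]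
  have hintcomp : ∀ (k j : ℕ), Integrable (fun x => (Good j).indicator φ (f^[k] x)) μ := by
    intro k j
    exact ((hf.iterate k).integrable_comp
      (hφint.indicator (hGoodMeas j)).aestronglyMeasurable).mpr
      (hφint.indicator (hGoodMeas j))
  -- Step A : key integral inequality
  have stepA : ∀ N : ℕ, ε * N ≤ ∑ j ∈ Finset.Icc 1 N, I j := by
    intro N
    -- a.e. pointwise bound
    have hae : ∀ᵐ x ∂μ, A N x ≤ ∑ j ∈ Finset.Icc 1 N,
        (Good j).indicator φ (f^[N - j] x) := by
      have hstep_ae : ∀ᵐ x ∂μ, ∀ j : ℕ, 1 ≤ j → j ≤ N →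
          A j (f^[N - j] x) ≤ A (j - 1) (f^[N - (j - 1)] x) + φ (f^[N - j] x) := by
        rw [ae_all_iff]
        intro j
        by_cases hjr : 1 ≤ j ∧ j ≤ N
        swap
        · exact Filter.Eventually.of_forall fun x h1 h2 => absurd ⟨h1, h2⟩ hjr
        obtain ⟨hja, hjb⟩ := hjr
        have h1 : ∀ᵐ z ∂μ, A j z ≤ A 1 z + A (j - 1) (f^[1] z) := by
          have := hsub 1 (j - 1)
          have hj1 : j - 1 + 1 = j := Nat.succ_pred_eq_of_pos hja
          simpa [hj1] using this
        have h2 := (hf.iterate (N - j)).quasiMeasurePreserving.ae h1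
        filter_upwards [h2] with x hx _ _
        have hiter : f^[1] (f^[N - j] x) = f^[N - (j - 1)] x := by
          rw [← Function.iterate_add_apply]
          congr 1
          omega
        calc A j (f^[N - j] x) ≤ A 1 (f^[N - j] x) + A (j - 1) (f^[1] (f^[N - j] x)) := hx
          _ ≤ φ (f^[N - j] x) + A (j - 1) (f^[N - (j - 1)] x) := by
              rw [hiter]; exact add_le_add (le_max_left _ _) le_rfl
          _ = _ := by ring
      filter_upwards [hstep_ae] with x hx
      have hrec := km_record (fun m => A m (f^[N - m] x)) (fun j => φ (f^[N - j] x)) N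
        (by simp [hA0]) ?_ (fun j => hφnn _) N le_rfl
      · refine le_trans (by simpa using hrec) ?_
        refine Finset.sum_le_sum fun j hj => ?_
        simp only [Finset.mem_Icc] at hj
        have hiff : (j ∈ {j : ℕ | ∀ m ≤ j, (fun m => A m (f^[N - m] x)) m
              ≤ (fun m => A m (f^[N - m] x)) j}) ↔ f^[N - j] x ∈ Good j := by
          simp only [Set.mem_setOf_eq, hGood]
          constructor
          · intro h m hm
            have := h m (hm)
            have hiter : f^[N - m] x = f^[j - m] (f^[N - j] x) := by
              rw [← Function.iterate_add_apply]; congr 1; omega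
            rwa [hiter] at this
          · intro h m hm
            have := h m hm
            have hiter : f^[N - m] x = f^[j - m] (f^[N - j] x) := by
              rw [← Function.iterate_add_apply]; congr 1; omega
            rwa [← hiter] at this
        by_cases hmem : f^[N - j] x ∈ Good j
        · rw [Set.indicator_of_mem (hiff.mpr hmem), Set.indicator_of_mem hmem]
        · rw [Set.indicator_of_notMem (fun hc => hmem (hiff.mp hc)),
            Set.indicator_of_notMem hmem]
      · intro j hj1 hjN
        exact hx j hj1 hjN
    -- integrate
    have hRHSint : Integrable (fun x => ∑ j ∈ Finset.Icc 1 N,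
        (Good j).indicator φ (f^[N - j] x)) μ :=
      integrable_finset_sum _ fun j _ => hintcomp (N - j) j
    have hmono := integral_mono_ae (hint N) hRHSint hae
    rw [integral_finset_sum _ (fun j _ => hintcomp (N - j) j)] at hmono
    have heq : ∀ j ∈ Finset.Icc 1 N,
        ∫ x, (Good j).indicator φ (f^[N - j] x) ∂μ = I j := by
      intro j _
      rw [hcomp (N - j) _ (hφint.indicator (hGoodMeas j)).aestronglyMeasurable,
        integral_indicator (hGoodMeas j)]
    rw [Finset.sum_congr rfl heq] at hmono
    exact le_trans (hgrow N) hmono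
  -- Step B : conclude positivity
  intro hzero
  set U : ℕ → Set X := fun M => ⋃ j : ℕ, ⋃ _ : M ≤ j, Good j with hU
  have hUmeas : ∀ M, MeasurableSet (U M) :=
    fun M => MeasurableSet.iUnion fun j => MeasurableSet.iUnion fun _ => hGoodMeas j
  have hUanti : ∀ M M', M ≤ M' → U M' ⊆ U M := by
    intro M M' h x hx
    simp only [hU, Set.mem_iUnion] at hx ⊢
    obtain ⟨j, hj, hxj⟩ := hx
    exact ⟨j, le_trans h hj, hxj⟩
  have hJlim : Tendsto (fun M => ∫ x in U M, φ x ∂μ) atTop (𝓝 0) := by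
    have h0 : (∫ x, (⋂ M : ℕ, U M).indicator φ x ∂μ) = 0 := by
      have : μ (⋂ M : ℕ, U M) = 0 := hzero
      rw [integral_indicator (MeasurableSet.iInter hUmeas)]
      rw [Measure.restrict_eq_zero.mpr this, integral_zero_measure]
    have hconv : Tendsto (fun M => ∫ x, (U M).indicator φ x ∂μ) atTop
        (𝓝 (∫ x, (⋂ M : ℕ, U M).indicator φ x ∂μ)) := by
      refine tendsto_integral_of_dominated_convergence φ
        (fun M => (hφint.indicator (hUmeas M)).aestronglyMeasurable)
        hφint
        (fun M => Filter.Eventually.of_forall fun x => by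
          rw [Real.norm_eq_abs, abs_of_nonneg (Set.indicator_nonneg (fun y _ => hφnn y) x)]
          classical
          simp only [Set.indicator_apply]
          split_ifs
          · exact le_refl _
          · exact hφnn x )
        (Filter.Eventually.of_forall fun x => ?_)
      -- pointwise convergence of indicators
      by_cases hx : x ∈ ⋂ M : ℕ, U M
      · have heq : ∀ M, (U M).indicator φ x = (⋂ M : ℕ, U M).indicator φ x := by
          intro M
          rw [Set.indicator_of_mem hx, Set.indicator_of_mem (Set.mem_iInter.mp hx M)]
        simp only [heq]
        exact tendsto_const_nhds
      · obtain ⟨M₀, hM₀⟩ : ∃ M₀, x ∉ U M₀ := by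
          by_contra hc
          push_neg at hc
          exact hx (Set.mem_iInter.mpr hc)
        rw [Set.indicator_of_notMem hx]
        refine tendsto_const_nhds.congr' ?_
        filter_upwards [eventually_ge_atTop M₀] with M hM
        exact (Set.indicator_of_notMem (fun hc => hM₀ (hUanti M₀ M hM hc)) _).symm
    rw [h0] at hconv
    convert hconv using 2 with M
    rw [integral_indicator (hUmeas M)]
  obtain ⟨M, hM⟩ := (hJlim.eventually (eventually_lt_nhds (half_pos hε))).exists
  -- for j ≥ M : I j ≤ J M < ε/2
  have hIle : ∀ j, M ≤ j → I j ≤ ∫ x in U M, φ x ∂μ := by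
    intro j hj
    refine setIntegral_mono_set hφint.integrableOn
      (Filter.Eventually.of_forall fun x => hφnn x) ?_
    refine HasSubset.Subset.eventuallyLE ?_
    intro x hx
    simp only [hU, Set.mem_iUnion]
    exact ⟨j, hj, hx⟩
  set C : ℝ := ∑ j ∈ Finset.Icc 1 M, I j with hC
  have hbound : ∀ N, M ≤ N → ε * N ≤ C + N * (ε / 2) := by
    intro N hN
    have hsplit : Finset.Icc 1 N = Finset.Icc 1 M ∪ Finset.Icc (M + 1) N := by
      ext j; simp only [Finset.mem_union, Finset.mem_Icc]; omega
    have hdisj : Disjoint (Finset.Icc 1 M) (Finset.Icc (M + 1) N) := by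
      rw [Finset.disjoint_left]; intro j hj hj'
      simp only [Finset.mem_Icc] at hj hj'; omega
    have : ∑ j ∈ Finset.Icc 1 N, I j = C + ∑ j ∈ Finset.Icc (M + 1) N, I j := by
      rw [hsplit, Finset.sum_union hdisj]
    have htail : ∑ j ∈ Finset.Icc (M + 1) N, I j ≤ N * (ε / 2) := by
      calc ∑ j ∈ Finset.Icc (M + 1) N, I j
          ≤ ∑ _j ∈ Finset.Icc (M + 1) N, (ε / 2) := by
            refine Finset.sum_le_sum fun j hj => ?_
            simp only [Finset.mem_Icc] at hj
            exact le_of_lt (lt_of_le_of_lt (hIle j (by omega)) hM)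
        _ = (Finset.Icc (M + 1) N).card * (ε / 2) := by
            rw [Finset.sum_const, nsmul_eq_mul]
        _ ≤ N * (ε / 2) := by
            have hcard : (Finset.Icc (M + 1) N).card ≤ N := by
              rw [Nat.card_Icc]; omega
            have := half_pos hε
            exact mul_le_mul_of_nonneg_right (by exact_mod_cast hcard) (le_of_lt this)
    calc ε * N ≤ ∑ j ∈ Finset.Icc 1 N, I j := stepA N
      _ = C + ∑ j ∈ Finset.Icc (M + 1) N, I j := this
      _ ≤ C + N * (ε / 2) := by linarith
  -- contradiction for large N
  obtain ⟨N, hN⟩ := exists_nat_gt (max (M : ℝ) (2 * C / ε + 1))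
  have hNM : M ≤ N := by
    have : (M : ℝ) ≤ N := le_of_lt (lt_of_le_of_lt (le_max_left _ _) hN)
    exact_mod_cast this
  have h1 := hbound N hNM
  have h2 : 2 * C / ε + 1 < N := lt_of_le_of_lt (le_max_right _ _) hN
  have h3 : ε / 2 * (N : ℝ) ≤ C := by linarith
  have h6 : ε * (2 * C / ε + 1) = 2 * C + ε := by field_simp
  have h7 : ε * (2 * C / ε + 1) < ε * N := (mul_lt_mul_iff_right₀ hε).mpr h2
  linarith
/-- Karlsson–Margulis: for an integrable subadditive cocycle `(a_n)` over an
ergodic measure-preserving system with finite exponent `λ = lim (1/n)∫a_n dμ`, there is a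
full-measure set `E` such that for every `x ∈ E` and `ε > 0` there is `L` for which the set
of `n` satisfying `a_n(x) − a_{n−i}(f^i x) ≥ (λ − ε)·i` for all `L ≤ i ≤ n` is infinite. -/
theorem karlsson_margulis {X : Type*} [MeasurableSpace X]
    (μ : Measure X) [IsProbabilityMeasure μ] (f : X → X) (hf : Ergodic f μ)
    (a : ℕ → X → ℝ) (ha0 : ∀ x, a 0 x = 0)
    (hsub : ∀ (x : X) (k n : ℕ), a (n + k) x ≤ a k x + a n (f^[k] x))
    (hint : ∀ n, Integrable (a n) μ) (lam : ℝ)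
    (hlam : Tendsto (fun n : ℕ => (n : ℝ)⁻¹ * ∫ x, a n x ∂μ) atTop (nhds lam)) :
    ∃ E : Set X, MeasurableSet E ∧ μ E = 1 ∧
      ∀ x ∈ E, ∀ ε > (0 : ℝ), ∃ L : ℕ,
        {n : ℕ | ∀ i : ℕ, L ≤ i → i ≤ n →
          (lam - ε) * (i : ℝ) ≤ a n x - a (n - i) (f^[i] x)}.Infinite := by
  classical
  have hmp : MeasurePreserving f μ μ := hf.toMeasurePreserving
  -- integral of composition with iterates
  have hcomp : ∀ (k : ℕ) (g : X → ℝ), AEStronglyMeasurable g μ →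
      ∫ x, g (f^[k] x) ∂μ = ∫ x, g x ∂μ := by
    intro k g hg
    have h1 : AEStronglyMeasurable g (Measure.map f^[k] μ) := by
      rwa [(hmp.iterate k).map_eq]
    rw [← integral_map (hmp.iterate k).measurable.aemeasurable h1, (hmp.iterate k).map_eq]
  set s : ℕ → ℝ := fun n => ∫ x, a n x ∂μ with hs_def
  -- subadditivity of the integral sequence
  have hs_sub : ∀ k n : ℕ, s (n + k) ≤ s k + s n := by
    intro k n
    have hcompint : Integrable (fun x => a n (f^[k] x)) μ :=
      ((hmp.iterate k).integrable_comp (hint n).aestronglyMeasurable).mpr (hint n)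
    have h1 : s (n + k) ≤ ∫ x, (a k x + a n (f^[k] x)) ∂μ :=
      integral_mono (hint (n + k)) ((hint k).add hcompint)
        (fun x => hsub x k n)
    rw [integral_add (hint k) hcompint,
      hcomp k (a n) (hint n).aestronglyMeasurable] at h1
    exact h1
  have hs0 : s 0 = 0 := by
    simp only [hs_def]
    simp [ha0]
  -- lam * n ≤ s n  for all n
  have hlow : ∀ n : ℕ, lam * n ≤ s n := by
    intro n
    rcases Nat.eq_zero_or_pos n with h0 | hpos
    · simp [h0, hs0]
    have hks : ∀ k : ℕ, s (k * n) ≤ k * s n := by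
      intro k
      induction k with
      | zero => simp [hs0]
      | succ k ih =>
        have : s (n + k * n) ≤ s (k * n) + s n := hs_sub (k * n) n
        have h2 : (k + 1) * n = n + k * n := by ring
        rw [h2]
        push_cast
        calc s (n + k * n) ≤ s (k * n) + s n := this
          _ ≤ k * s n + s n := by linarith
          _ = (k + 1) * s n := by ring
    have hsubseq : Tendsto (fun k : ℕ => ((k * n : ℕ) : ℝ)⁻¹ * s (k * n)) atTop (𝓝 lam) := by
      refine hlam.comp ?_
      exact tendsto_atTop_mono (fun k => Nat.le_mul_of_pos_right k hpos) tendsto_id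
    have hbound : ∀ᶠ k : ℕ in atTop, ((k * n : ℕ) : ℝ)⁻¹ * s (k * n) ≤ (n : ℝ)⁻¹ * s n := by
      filter_upwards [eventually_ge_atTop 1] with k hk
      have hkn : (0 : ℝ) < (k : ℝ) * n := by
        have : (0:ℝ) < (k:ℝ) := by exact_mod_cast hk
        have : (0:ℝ) < (n:ℝ) := by exact_mod_cast hpos
        positivity
      push_cast
      rw [mul_inv]
      calc (k : ℝ)⁻¹ * (n : ℝ)⁻¹ * s (k * n)
          ≤ (k : ℝ)⁻¹ * (n : ℝ)⁻¹ * (k * s n) := by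
            refine mul_le_mul_of_nonneg_left (hks k) ?_
            have h1 : (0:ℝ) ≤ (k:ℝ)⁻¹ := by positivity
            have h2 : (0:ℝ) ≤ (n:ℝ)⁻¹ := by positivity
            positivity
        _ = (n : ℝ)⁻¹ * s n := by
            have hk0 : (k : ℝ) ≠ 0 := by
              have : (0:ℝ) < (k:ℝ) := by exact_mod_cast hk
              linarith
            field_simp
    have hle : lam ≤ (n : ℝ)⁻¹ * s n := le_of_tendsto hsubseq hbound
    have hn0 : (0:ℝ) < (n:ℝ) := by exact_mod_cast hpos
    calc lam * n ≤ ((n : ℝ)⁻¹ * s n) * n := by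
          exact mul_le_mul_of_nonneg_right hle (le_of_lt hn0)
      _ = s n := by field_simp
  -- measurable versions of a
  set ta : ℕ → X → ℝ := fun n => if n = 0 then (fun _ => 0)
    else (hint n).aestronglyMeasurable.mk (a n) with hta_def
  have hta_meas : ∀ n, StronglyMeasurable (ta n) := by
    intro n
    simp only [hta_def]
    split_ifs
    · exact stronglyMeasurable_const
    · exact (hint n).aestronglyMeasurable.stronglyMeasurable_mk
  have hta_ae : ∀ n, a n =ᵐ[μ] ta n := by
    intro n
    simp only [hta_def]
    split_ifs with h
    · subst h; exact Filter.Eventually.of_forall ha0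
    · exact (hint n).aestronglyMeasurable.ae_eq_mk
  have hta_int : ∀ n, Integrable (ta n) μ := fun n => (hint n).congr (hta_ae n)
  have hta0 : ∀ x, ta 0 x = 0 := by intro x; simp [hta_def]
  have hta_integral : ∀ n, ∫ x, ta n x ∂μ = s n :=
    fun n => (integral_congr_ae (hta_ae n).symm)
  -- the full measure set Ω on whose orbits a = ta
  obtain ⟨T, hT_sub, hT_meas, hT0⟩ :
      ∃ T, {x | ∃ n, a n x ≠ ta n x} ⊆ T ∧ MeasurableSet T ∧ μ T = 0 := by
    refine exists_measurable_superset_of_null ?_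
    have : {x | ∃ n, a n x ≠ ta n x} = ⋃ n, {x | a n x ≠ ta n x} := by
      ext x; simp
    rw [this]
    refine measure_iUnion_null fun n => ?_
    exact ae_iff.mp (hta_ae n)
  set Om : Set X := ⋂ j : ℕ, f^[j] ⁻¹' Tᶜ with hOm_def
  have hOm_meas : MeasurableSet Om :=
    MeasurableSet.iInter fun j => (hmp.iterate j).measurable hT_meas.compl
  have hOm_compl : μ Omᶜ = 0 := by
    have : Omᶜ = ⋃ j : ℕ, f^[j] ⁻¹' T := by
      simp [hOm_def, Set.compl_iInter]
    rw [this]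
    exact measure_iUnion_null fun j =>
      (hmp.iterate j).quasiMeasurePreserving.preimage_null hT0
  have hOm_eq : ∀ x ∈ Om, ∀ j n : ℕ, a n (f^[j] x) = ta n (f^[j] x) := by
    intro x hx j n
    have hj : f^[j] x ∈ Tᶜ := Set.mem_iInter.mp hx j
    by_contra hne
    exact hj (hT_sub ⟨n, hne⟩)
  have hOm_eq0 : ∀ x ∈ Om, ∀ n : ℕ, a n x = ta n x := by
    intro x hx n
    have := hOm_eq x hx 0 n
    simpa using this
  have hOm_fwd : ∀ x ∈ Om, ∀ m : ℕ, f^[m] x ∈ Om := by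
    intro x hx m
    refine Set.mem_iInter.mpr fun j => ?_
    have := Set.mem_iInter.mp hx (j + m)
    rwa [Set.mem_preimage, Function.iterate_add_apply] at this
  -- subadditivity for ta, pointwise on Om-orbits and a.e.
  have hta_sub_pt : ∀ x ∈ Om, ∀ k n : ℕ, ta (n + k) x ≤ ta k x + ta n (f^[k] x) := by
    intro x hx k n
    rw [← hOm_eq0 x hx (n + k), ← hOm_eq0 x hx k, ← hOm_eq x hx k n]
    exact hsub x k n
  have hta_sub_ae : ∀ k n : ℕ, ∀ᵐ x ∂μ, ta (n + k) x ≤ ta k x + ta n (f^[k] x) := by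
    intro k n
    filter_upwards [(hta_ae (n + k)).symm, (hta_ae k).symm,
      (hmp.iterate k).quasiMeasurePreserving.ae (hta_ae n)] with x h1 h2 h3
    rw [h1, h2, ← h3]
    exact hsub x k n
  -- the scaled cocycle and good sets
  set A : ℝ → ℕ → X → ℝ := fun ε n x => ta n x - (lam - ε) * n with hA_def
  set GA : ℝ → ℕ → ℕ → Set X := fun ε L j =>
    ⋂ i : ℕ, ⋂ _ : L ≤ i, ⋂ _ : i ≤ j,
      {x | (lam - ε) * i ≤ ta j x - ta (j - i) (f^[i] x)} with hGA_def
  set Bset : ℝ → Set X := fun ε =>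
    ⋃ L : ℕ, ⋂ M : ℕ, ⋃ j : ℕ, ⋃ _ : M ≤ j, GA ε L j with hB_def
  have hGA_mem : ∀ ε : ℝ, ∀ L j : ℕ, ∀ x, x ∈ GA ε L j ↔
      ∀ i, L ≤ i → i ≤ j → (lam - ε) * i ≤ ta j x - ta (j - i) (f^[i] x) := by
    intro ε L j x
    simp [hGA_def]
  have hB_mem : ∀ ε : ℝ, ∀ x, x ∈ Bset ε ↔
      ∃ L : ℕ, ∀ M : ℕ, ∃ j, M ≤ j ∧ x ∈ GA ε L j := by
    intro ε x
    simp only [hB_def, Set.mem_iUnion, Set.mem_iInter]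
    constructor
    · rintro ⟨L, hL⟩
      exact ⟨L, fun M => by obtain ⟨j, hj, hx⟩ := hL M; exact ⟨j, hj, hx⟩⟩
    · rintro ⟨L, hL⟩
      exact ⟨L, fun M => by obtain ⟨j, hj, hx⟩ := hL M; exact ⟨j, hj, hx⟩⟩
  have hGA_meas : ∀ ε : ℝ, ∀ L j : ℕ, MeasurableSet (GA ε L j) := by
    intro ε L j
    refine MeasurableSet.iInter fun i => MeasurableSet.iInter fun _ =>
      MeasurableSet.iInter fun _ => ?_
    exact measurableSet_le measurable_const
      (((hta_meas j).measurable).sub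
        (((hta_meas (j - i)).measurable).comp (hmp.iterate i).measurable))
  have hB_meas : ∀ ε : ℝ, MeasurableSet (Bset ε) := by
    intro ε
    exact MeasurableSet.iUnion fun L => MeasurableSet.iInter fun M =>
      MeasurableSet.iUnion fun j => MeasurableSet.iUnion fun _ => hGA_meas ε L j
  -- the core positivity result, translated into GA-sets with L = 0
  have hcore : ∀ ε : ℝ, 0 < ε →
      μ (⋂ M : ℕ, ⋃ j : ℕ, ⋃ _ : M ≤ j, GA ε 0 j) ≠ 0 := by
    intro ε hε
    have hAmeas : ∀ n, StronglyMeasurable (A ε n) :=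
      fun n => (hta_meas n).sub stronglyMeasurable_const
    have hA0 : ∀ x, A ε 0 x = 0 := by intro x; simp [hA_def, hta0]
    have hAsub : ∀ k n : ℕ, ∀ᵐ x ∂μ, A ε (n + k) x ≤ A ε k x + A ε n (f^[k] x) := by
      intro k n
      filter_upwards [hta_sub_ae k n] with x hx
      simp only [hA_def]
      push_cast
      linarith
    have hAint : ∀ n, Integrable (A ε n) μ :=
      fun n => (hta_int n).sub (integrable_const _)
    have hAgrow : ∀ N : ℕ, ε * N ≤ ∫ x, A ε N x ∂μ := by
      intro N
      have : ∫ x, A ε N x ∂μ = s N - (lam - ε) * N := by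
        simp only [hA_def]
        rw [integral_sub (hta_int N) (integrable_const _), hta_integral N]
        simp
      rw [this]
      have := hlow N
      linarith
    have hkc := km_core μ f hmp (A ε) hAmeas hA0 hAsub hAint ε hε hAgrow
    -- identify the two limsup sets
    have hsets : (⋂ M : ℕ, ⋃ j : ℕ, ⋃ _ : M ≤ j,
        {x | ∀ m ≤ j, A ε m (f^[j - m] x) ≤ A ε j x}) ⊆
        ⋂ M : ℕ, ⋃ j : ℕ, ⋃ _ : M ≤ j, GA ε 0 j := by
      refine Set.iInter_mono fun M => Set.iUnion_mono fun j => Set.iUnion_mono fun hj => ?_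
      intro x hx
      rw [hGA_mem]
      intro i _ hij
      have hm := hx (j - i) (Nat.sub_le j i)
      simp only [hA_def] at hm
      have hji : j - (j - i) = i := by omega
      rw [hji] at hm
      have hcast : ((j - i : ℕ) : ℝ) = (j : ℝ) - (i : ℝ) := by
        push_cast [Nat.cast_sub hij]
        ring
      rw [hcast] at hm
      linarith
    intro h0
    exact hkc (measure_mono_null hsets h0)
  -- bootstrap : pushing good points forward improves nothing but keeps goodness
  have hboot : ∀ ε' ε : ℝ, 0 < ε' → ε' < ε → ∀ x ∈ Om, x ∈ Bset ε' →
      ∀ m : ℕ, f^[m] x ∈ Bset ε := by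
    intro ε' ε hε' hlt x hxOm hxB m
    obtain ⟨L₀, hL₀⟩ := (hB_mem ε' x).mp hxB
    set K : ℕ := Nat.ceil ((ta m x - (lam - ε') * m) / (ε - ε')) with hK_def
    set L' : ℕ := max L₀ K with hL'_def
    rw [hB_mem]
    refine ⟨L', fun M => ?_⟩
    obtain ⟨j, hjM, hxGA⟩ := hL₀ (M + m)
    rw [hGA_mem] at hxGA
    refine ⟨j - m, by omega, ?_⟩
    rw [hGA_mem]
    intro i hiL' hij
    have hiL₀ : L₀ ≤ i + m := by
      have : L₀ ≤ L' := le_max_left _ _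
      omega
    have himj : i + m ≤ j := by omega
    have h1 := hxGA (i + m) hiL₀ himj
    -- subadditivity at x
    have h2 : ta j x ≤ ta m x + ta (j - m) (f^[m] x) := by
      have := hta_sub_pt x hxOm m (j - m)
      have hjm : j - m + m = j := by omega
      rwa [hjm] at this
    -- rewrite iterates
    have h3 : ta (j - (i + m)) (f^[i + m] x) = ta (j - m - i) (f^[i] (f^[m] x)) := by
      rw [Function.iterate_add_apply]
      congr 1
      omega
    -- threshold inequality
    have h4 : (ta m x - (lam - ε') * m) ≤ (ε - ε') * i := by
      have hKi : (K : ℝ) ≤ (i : ℝ) := by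
        have : K ≤ i := le_trans (le_max_right L₀ K) hiL'
        exact_mod_cast this
      have hceil : (ta m x - (lam - ε') * m) / (ε - ε') ≤ (K : ℝ) := Nat.le_ceil _
      have hpos : (0:ℝ) < ε - ε' := by linarith
      have := le_trans hceil hKi
      calc ta m x - (lam - ε') * m
          = ((ta m x - (lam - ε') * m) / (ε - ε')) * (ε - ε') := by field_simp
        _ ≤ (i : ℝ) * (ε - ε') := by
            exact mul_le_mul_of_nonneg_right this (le_of_lt hpos)
        _ = (ε - ε') * i := by ring
    have hcast : ((i + m : ℕ) : ℝ) = (i : ℝ) + (m : ℝ) := by push_cast; ring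
    rw [hcast] at h1
    rw [h3] at h1
    linarith
  -- each Bset (1/(k+1)) has full measure
  have hfull : ∀ k : ℕ, μ (Bset (1 / (k + 1))) = 1 := by
    intro k
    set ε : ℝ := 1 / ((k : ℝ) + 1) with hε_def
    have hεpos : 0 < ε := by positivity
    set ε' : ℝ := ε / 2 with hε'_def
    have hε'pos : 0 < ε' := by positivity
    have hε'lt : ε' < ε := by
      simp only [hε'_def]
      linarith
    set W : Set X := Om ∩ ⋂ M : ℕ, ⋃ j : ℕ, ⋃ _ : M ≤ j, GA ε' 0 j with hW_def
    have hWpos : μ W ≠ 0 := by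
      intro h0
      refine hcore ε' hε'pos ?_
      have hsub2 : (⋂ M : ℕ, ⋃ j : ℕ, ⋃ _ : M ≤ j, GA ε' 0 j) ⊆
          ((⋂ M : ℕ, ⋃ j : ℕ, ⋃ _ : M ≤ j, GA ε' 0 j) ∩ Om) ∪ Omᶜ := by
        intro x hx
        by_cases hxOm : x ∈ Om
        · exact Or.inl ⟨hx, hxOm⟩
        · exact Or.inr hxOm
      have hWeq : μ ((⋂ M : ℕ, ⋃ j : ℕ, ⋃ _ : M ≤ j, GA ε' 0 j) ∩ Om) = 0 := by
        have heq2 : (⋂ M : ℕ, ⋃ j : ℕ, ⋃ _ : M ≤ j, GA ε' 0 j) ∩ Om = W := by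
          rw [hW_def, Set.inter_comm]
        rw [heq2]; exact h0
      refine le_antisymm ?_ zero_le
      calc μ (⋂ M : ℕ, ⋃ j : ℕ, ⋃ _ : M ≤ j, GA ε' 0 j)
          ≤ μ (((⋂ M : ℕ, ⋃ j : ℕ, ⋃ _ : M ≤ j, GA ε' 0 j) ∩ Om) ∪ Omᶜ) :=
            measure_mono hsub2
        _ ≤ μ ((⋂ M : ℕ, ⋃ j : ℕ, ⋃ _ : M ≤ j, GA ε' 0 j) ∩ Om) + μ Omᶜ :=
            measure_union_le _ _
        _ = 0 := by rw [hWeq, hOm_compl]; simp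
    -- W ⊆ Aset
    set Aset : Set X := ⋂ m : ℕ, f^[m] ⁻¹' (Bset ε) with hAset_def
    have hAset_meas : MeasurableSet Aset :=
      MeasurableSet.iInter fun m => (hmp.iterate m).measurable (hB_meas ε)
    have hWA : W ⊆ Aset := by
      rintro x ⟨hxOm, hxLim⟩
      have hxB : x ∈ Bset ε' := by
        rw [hB_mem]
        refine ⟨0, fun M => ?_⟩
        have := Set.mem_iInter.mp hxLim M
        simp only [Set.mem_iUnion] at this
        obtain ⟨j, hj, hx⟩ := this
        exact ⟨j, hj, hx⟩
      refine Set.mem_iInter.mpr fun m => ?_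
      exact hboot ε' ε hε'pos hε'lt x hxOm hxB m
    have hApos : μ Aset ≠ 0 := fun h0 => hWpos (measure_mono_null hWA h0)
    -- Aset is forward invariant
    have hAinv : Aset ⊆ f ⁻¹' Aset := by
      intro x hx
      refine Set.mem_preimage.mpr (Set.mem_iInter.mpr fun m => ?_)
      have h5 := Set.mem_iInter.mp hx (m + 1)
      rw [Set.mem_preimage] at h5 ⊢
      rwa [← Function.iterate_succ_apply]
    have h01 := hf.ae_empty_or_univ_of_ae_le_preimage hAset_meas.nullMeasurableSet
      (HasSubset.Subset.eventuallyLE hAinv)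
    rcases h01 with h0 | h1
    · exact absurd (by rw [measure_congr h0]; simp) hApos
    · have hA1 : μ Aset = 1 := by rw [measure_congr h1]; simp
      have hsub0 : Aset ⊆ Bset ε := by
        intro x hx
        have := Set.mem_iInter.mp hx 0
        simpa using this
      have h2 : (1 : ENNReal) ≤ μ (Bset ε) := hA1 ▸ measure_mono hsub0
      refine le_antisymm ?_ ?_
      · exact le_trans (measure_mono (Set.subset_univ _)) (le_of_eq (measure_univ))
      · exact h2
  -- assemble E
  set E : Set X := Om ∩ (⋂ k : ℕ, Bset (1 / (k + 1))) with hE_def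
  have hE_meas : MeasurableSet E :=
    hOm_meas.inter (MeasurableSet.iInter fun k => hB_meas _)
  have hE_full : μ E = 1 := by
    have hcompl : μ Eᶜ = 0 := by
      have : Eᶜ = Omᶜ ∪ ⋃ k : ℕ, (Bset (1 / (k + 1)))ᶜ := by
        simp [hE_def, Set.compl_inter, Set.compl_iInter]
      rw [this]
      refine measure_union_null hOm_compl (measure_iUnion_null fun k => ?_)
      have := hfull k
      rw [measure_compl (hB_meas _) (measure_ne_top μ _), this]
      simp
    have := measure_add_measure_compl hE_meas (μ := μ)
    rw [hcompl, measure_univ] at this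
    simpa using this
  refine ⟨E, hE_meas, hE_full, ?_⟩
  intro x hxE ε hε
  obtain ⟨k, hk⟩ := exists_nat_one_div_lt hε
  have hxOm : x ∈ Om := hxE.1
  have hxB : x ∈ Bset (1 / (k + 1)) := Set.mem_iInter.mp hxE.2 k
  obtain ⟨L, hL⟩ := (hB_mem _ x).mp hxB
  refine ⟨L, ?_⟩
  have hsubset : ∀ j : ℕ, x ∈ GA (1 / (k + 1)) L j →
      j ∈ {n : ℕ | ∀ i : ℕ, L ≤ i → i ≤ n →
        (lam - ε) * (i : ℝ) ≤ a n x - a (n - i) (f^[i] x)} := by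
    intro j hj
    rw [hGA_mem] at hj
    intro i hLi hij
    have h1 := hj i hLi hij
    have h2 : a j x = ta j x := hOm_eq0 x hxOm j
    have h3 : a (j - i) (f^[i] x) = ta (j - i) (f^[i] x) := hOm_eq x hxOm i (j - i)
    rw [h2, h3]
    have h4 : (lam - ε) * i ≤ (lam - 1 / ((k : ℝ) + 1)) * i := by
      have : (0:ℝ) ≤ (i : ℝ) := Nat.cast_nonneg i
      nlinarith [hk]
    exact le_trans h4 h1
  refine Set.infinite_of_not_bddAbove ?_
  rintro ⟨b, hb⟩
  obtain ⟨j, hjb, hjGA⟩ := hL (b + 1)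
  have hmem := hsubset j hjGA
  have := hb hmem
  omega
end

section
/- Let (X,μ,f) be an ergodic measure-preserving system on a probability space and let a_n^{(1)}, …, a_n^{(m)} be subadditive cocycles over f, each a_n^{(j)} integrable, whose exponents λ^{(1)}, …, λ^{(m)} (where λ^{(j)} = lim_{n→∞} (1/n)∫a_n^{(j)} dμ) are all finite. Then there exists a set E ⊆ X with μ(E) = 1 such that for each x ∈ E and each ε > 0 there is an integer L = L(x,ε) for which the set of integers n satisfying, simultaneously for every j = 1,…,m, a_n^{(j)}(x) − a_{n−i}^{(j)}(f^i x) ≥ (λ^{(j)} − ε)·i for all integers i with L ≤ i ≤ n, is infinite. -/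
open MeasureTheory Filter Metric Real Topology Function

namespace KMproof

variable {X : Type*} [MeasurableSpace X] {μ : Measure X} {f : X → X}

lemma integral_comp_iterate (hmp : MeasurePreserving f μ μ) {h : X → ℝ}
    (hm : AEStronglyMeasurable h μ) (k : ℕ) :
    ∫ x, h (f^[k] x) ∂μ = ∫ x, h x ∂μ := by
  have h2 : MeasurePreserving f^[k] μ μ := hmp.iterate k
  have e : ∫ x, h x ∂μ = ∫ y, h y ∂(Measure.map f^[k] μ) := by rw [h2.map_eq]
  rw [e, integral_map h2.measurable.aemeasurable (by rwa [h2.map_eq])]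

lemma integral_comp (hmp : MeasurePreserving f μ μ) {h : X → ℝ}
    (hm : AEStronglyMeasurable h μ) :
    ∫ x, h (f x) ∂μ = ∫ x, h x ∂μ := by
  simpa using integral_comp_iterate hmp hm 1

lemma integrable_comp_iterate (hmp : MeasurePreserving f μ μ) {h : X → ℝ}
    (hi : Integrable h μ) (k : ℕ) : Integrable (fun x => h (f^[k] x)) μ :=
  ((hmp.iterate k).integrable_comp hi.aestronglyMeasurable).mpr hi

lemma measurable_birkhoffSum (hfm : Measurable f) {g : X → ℝ} (hgm : Measurable g) (n : ℕ) :
    Measurable (birkhoffSum f g n) :=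
  Finset.measurable_sum _ fun i _ => hgm.comp (hfm.iterate i)

lemma integrable_birkhoffSum (hmp : MeasurePreserving f μ μ) {g : X → ℝ}
    (hgi : Integrable g μ) (n : ℕ) : Integrable (birkhoffSum f g n) μ := by
  have : birkhoffSum f g n = fun x => ∑ i ∈ Finset.range n, g (f^[i] x) := rfl
  rw [this]
  exact integrable_finset_sum _ fun i _ => integrable_comp_iterate hmp hgi i

noncomputable def mSup (f : X → X) (g : X → ℝ) : ℕ → X → ℝ
  | 0 => g
  | (N+1) => fun x => max (mSup f g N x) (birkhoffSum f g (N+2) x)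

lemma mSup_mono (g : X → ℝ) {N M : ℕ} (h : N ≤ M) (x : X) :
    mSup f g N x ≤ mSup f g M x := by
  induction M with
  | zero => simp_all
  | succ M ih =>
    rcases Nat.eq_or_lt_of_le h with h' | h'
    · subst h'; rfl
    · exact le_trans (ih (Nat.lt_succ_iff.mp h')) (le_max_left _ _)

lemma birkhoff_le_mSup (g : X → ℝ) {n N : ℕ} (h1 : 1 ≤ n) (h2 : n ≤ N + 1) (x : X) :
    birkhoffSum f g n x ≤ mSup f g N x := by
  induction N with
  | zero =>
    have : n = 1 := le_antisymm h2 h1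
    subst this
    simp [mSup, birkhoffSum_one]
  | succ N ih =>
    rcases Nat.eq_or_lt_of_le h2 with h' | h'
    · subst h'; exact le_max_right _ _
    · exact le_trans (ih (Nat.lt_succ_iff.mp h')) (le_max_left _ _)

lemma mSup_exists_birkhoff (g : X → ℝ) (N : ℕ) (x : X) :
    ∃ n, 1 ≤ n ∧ n ≤ N + 1 ∧ mSup f g N x ≤ birkhoffSum f g n x := by
  induction N with
  | zero => exact ⟨1, le_refl _, le_refl _, by simp [mSup, birkhoffSum_one]⟩
  | succ N ih =>
    rcases ih with ⟨n, h1, h2, h3⟩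
    rcases le_or_gt (mSup f g (N+1) x) (mSup f g N x) with h | h
    · exact ⟨n, h1, h2.trans (Nat.le_succ _), h.trans h3⟩
    · refine ⟨N + 2, by omega, by omega, ?_⟩
      have : mSup f g (N+1) x = max (mSup f g N x) (birkhoffSum f g (N+2) x) := rfl
      rw [this] at h ⊢
      rcases max_cases (mSup f g N x) (birkhoffSum f g (N+2) x) with ⟨h4, h5⟩ | ⟨h4, h5⟩
      · rw [h4] at h; exact absurd h (lt_irrefl _)
      · rw [h4]

lemma mSup_key (g : X → ℝ) (N : ℕ) (x : X) :
    mSup f g N x ≤ g x + max (mSup f g N (f x)) 0 := by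
  induction N with
  | zero =>
    have : mSup f g 0 x = g x := rfl
    rw [this]
    nlinarith [le_max_right (mSup f g 0 (f x)) (0:ℝ)]
  | succ N ih =>
    have h1 : mSup f g N x ≤ g x + max (mSup f g (N+1) (f x)) 0 :=
      le_trans ih (by gcongr; exact mSup_mono g (Nat.le_succ N) (f x))
    have h2 : birkhoffSum f g (N+2) x ≤ g x + max (mSup f g (N+1) (f x)) 0 := by
      have e : birkhoffSum f g (N+2) x = g x + birkhoffSum f g (N+1) (f x) := by
        rw [birkhoffSum_succ']
      rw [e]
      have := birkhoff_le_mSup (f := f) g (n := N+1) (N := N+1) (by omega) (by omega) (f x)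
      have h0 := le_max_left (mSup f g (N+1) (f x)) (0:ℝ)
      linarith
    exact max_le h1 h2

lemma measurable_mSup (hfm : Measurable f) {g : X → ℝ} (hgm : Measurable g) (N : ℕ) :
    Measurable (mSup f g N) := by
  induction N with
  | zero => exact hgm
  | succ N ih => exact Measurable.max ih ((measurable_birkhoffSum hfm hgm (N+2)).comp measurable_id)

lemma integrable_mSup (hmp : MeasurePreserving f μ μ) {g : X → ℝ}
    (hgi : Integrable g μ) (N : ℕ) : Integrable (mSup f g N) μ := by
  induction N with
  | zero => exact hgi
  | succ N ih =>
    have : mSup f g (N+1) = fun x => max (mSup f g N x) (birkhoffSum f g (N+2) x) := rfl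
    rw [this]
    exact ih.sup (integrable_birkhoffSum hmp hgi (N+2))

/-- Garsia's maximal ergodic theorem. -/
theorem maximal_ergodic (hmp : MeasurePreserving f μ μ) {g : X → ℝ}
    (hgm : Measurable g) (hgi : Integrable g μ) :
    0 ≤ ∫ x in {x | ∃ n, 1 ≤ n ∧ 0 < birkhoffSum f g n x}, g x ∂μ := by
  set A : ℕ → Set X := fun N => {x | 0 < mSup f g N x} with hA
  have hfm : Measurable f := hmp.measurable
  have hAm : ∀ N, MeasurableSet (A N) := fun N =>
    measurableSet_lt measurable_const (measurable_mSup hfm hgm N)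
  -- step 1
  have step1 : ∀ N, 0 ≤ ∫ x in A N, g x ∂μ := by
    intro N
    set MP : X → ℝ := fun x => max (mSup f g N x) 0 with hMP
    have hMPm : Measurable MP := (measurable_mSup hfm hgm N).max measurable_const
    have hMPi : Integrable MP μ := (integrable_mSup hmp hgi N).pos_part
    have hMPfi : Integrable (fun x => MP (f x)) μ := by
      simpa using integrable_comp_iterate hmp hMPi 1
    have key : ∫ x, MP x ∂μ ≤ (∫ x in A N, g x ∂μ) + ∫ x, MP (f x) ∂μ := by
      have split : ∫ x, MP x ∂μ = (∫ x in A N, MP x ∂μ) + ∫ x in (A N)ᶜ, MP x ∂μ :=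
        (integral_add_compl (hAm N) hMPi).symm
      have zero_c : ∫ x in (A N)ᶜ, MP x ∂μ = 0 := by
        have : ∀ x ∈ (A N)ᶜ, MP x = 0 := by
          intro x hx
          simp only [hA, Set.mem_compl_iff, Set.mem_setOf_eq, not_lt] at hx
          simp [hMP, max_eq_right hx]
        rw [setIntegral_congr_fun (hAm N).compl this, integral_zero]
      have ptwise : ∀ x ∈ A N, MP x ≤ g x + MP (f x) := by
        intro x hx
        simp only [hA, Set.mem_setOf_eq] at hx
        have : MP x = mSup f g N x := max_eq_left hx.le
        rw [this]
        exact mSup_key g N x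
      have h1 : ∫ x in A N, MP x ∂μ ≤ ∫ x in A N, (g x + MP (f x)) ∂μ := by
        apply setIntegral_mono_on hMPi.integrableOn (hgi.add hMPfi).integrableOn (hAm N) ptwise
      have h2 : ∫ x in A N, (g x + MP (f x)) ∂μ
          = (∫ x in A N, g x ∂μ) + ∫ x in A N, MP (f x) ∂μ :=
        integral_add hgi.integrableOn hMPfi.integrableOn
      have h3 : ∫ x in A N, MP (f x) ∂μ ≤ ∫ x, MP (f x) ∂μ := by
        apply setIntegral_le_integral hMPfi
        filter_upwards with x
        simp [hMP]
      linarith [split, zero_c, h1, h2, h3]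
    have e : ∫ x, MP (f x) ∂μ = ∫ x, MP x ∂μ := integral_comp hmp hMPi.aestronglyMeasurable
    rw [e] at key
    linarith
  -- step 2
  have hmono : Monotone A := by
    intro N M h x hx
    simp only [hA, Set.mem_setOf_eq] at hx ⊢
    exact lt_of_lt_of_le hx (mSup_mono g h x)
  have hunion : (⋃ N, A N) = {x | ∃ n, 1 ≤ n ∧ 0 < birkhoffSum f g n x} := by
    ext x
    simp only [Set.mem_iUnion, hA, Set.mem_setOf_eq]
    constructor
    · rintro ⟨N, hN⟩
      obtain ⟨n, h1, h2, h3⟩ := mSup_exists_birkhoff (f := f) g N x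
      exact ⟨n, h1, lt_of_lt_of_le hN h3⟩
    · rintro ⟨n, h1, h2⟩
      exact ⟨n, lt_of_lt_of_le h2 (birkhoff_le_mSup g h1 (by omega) x)⟩
  have := tendsto_setIntegral_of_monotone hAm hmono (by rw [hunion]; exact hgi.integrableOn)
  rw [hunion] at this
  exact ge_of_tendsto' this step1


lemma birkhoffSum_sub_const (f : X → X) (g : X → ℝ) (c : ℝ) (n : ℕ) (x : X) :
    birkhoffSum f (fun y => g y - c) n x = birkhoffSum f g n x - n * c := by
  unfold birkhoffSum
  rw [Finset.sum_sub_distrib, Finset.sum_const, Finset.card_range, nsmul_eq_mul]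

/-- The "frequently above slope β" set. -/
def freqSet (f : X → X) (g : X → ℝ) (β : ℝ) : Set X :=
  {x | ∀ m : ℕ, ∃ n, m ≤ n ∧ β * n ≤ birkhoffSum f g n x}

lemma measurableSet_freqSet (hfm : Measurable f) {g : X → ℝ} (hgm : Measurable g) (β : ℝ) :
    MeasurableSet (freqSet f g β) := by
  have : freqSet f g β = ⋂ m : ℕ, ⋃ n : ℕ, ⋃ _ : m ≤ n,
      {x | β * n ≤ birkhoffSum f g n x} := by
    ext x; simp [freqSet]
  rw [this]
  exact MeasurableSet.iInter fun m => MeasurableSet.iUnion fun n => MeasurableSet.iUnion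
    fun _ => measurableSet_le measurable_const (measurable_birkhoffSum hfm hgm n)



theorem one_sided (hf : Ergodic f μ) [IsProbabilityMeasure μ] {g : X → ℝ}
    (hgm : Measurable g) (hgi : Integrable g μ) {β : ℝ} (hβ : ∫ x, g x ∂μ < β) :
    μ (freqSet f g β) = 0 := by
  have hfm : Measurable f := hf.toMeasurePreserving.measurable
  have hmp : MeasurePreserving f μ μ := hf.toMeasurePreserving
  by_contra hpos
  set I : ℝ := ∫ x, g x ∂μ with hI
  set β' : ℝ := (I + β) / 2 with hβ'
  set β'' : ℝ := (I + β') / 2 with hβ''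
  have hb1 : I < β'' := by rw [hβ'', hβ']; linarith
  have hb2 : β'' < β' := by rw [hβ'', hβ']; linarith
  have hb3 : β' < β := by rw [hβ']; linarith
  have hsub : freqSet f g β ⊆ freqSet f g β' := by
    intro x hx m
    obtain ⟨n, hn1, hn2⟩ := hx m
    exact ⟨n, hn1, le_trans (by nlinarith [Nat.cast_nonneg (α := ℝ) n]) hn2⟩
  set B := freqSet f g β' with hB
  have hBm : MeasurableSet B := measurableSet_freqSet hfm hgm β'
  have hBpos : 0 < μ B :=
    lt_of_lt_of_le (pos_iff_ne_zero.mpr hpos) (measure_mono hsub)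
  -- the invariant limsup set
  set It : Set X := ⋂ m : ℕ, ⋃ t : ℕ, ⋃ _ : m ≤ t, f^[t] ⁻¹' B with hIt
  have hItm : MeasurableSet It :=
    MeasurableSet.iInter fun m => MeasurableSet.iUnion fun t => MeasurableSet.iUnion
      fun _ => hBm.preimage (hfm.iterate t)
  have hinv : f ⁻¹' It = It := by
    ext x
    simp only [hIt, Set.mem_preimage, Set.mem_iInter, Set.mem_iUnion]
    constructor
    · intro h m
      obtain ⟨t, ht, htB⟩ := h m
      refine ⟨t + 1, by omega, ?_⟩
      rwa [Function.iterate_succ_apply]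
    · intro h m
      obtain ⟨s, hs, hsB⟩ := h (m + 1)
      obtain ⟨t, rfl⟩ : ∃ t, s = t + 1 := ⟨s - 1, by omega⟩
      refine ⟨t, by omega, ?_⟩
      rwa [Function.iterate_succ_apply] at hsB
  have hIpos : 0 < μ It := by
    have hD : ∀ m : ℕ, μ B ≤ μ (⋃ t : ℕ, ⋃ _ : m ≤ t, f^[t] ⁻¹' B) := by
      intro m
      have h1 : f^[m] ⁻¹' B ⊆ ⋃ t : ℕ, ⋃ _ : m ≤ t, f^[t] ⁻¹' B := by
        intro x hx
        simp only [Set.mem_iUnion]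
        exact ⟨m, le_refl m, hx⟩
      calc μ B = μ (f^[m] ⁻¹' B) :=
            ((hmp.iterate m).measure_preimage hBm.nullMeasurableSet).symm
        _ ≤ _ := measure_mono h1
    have hanti : Antitone (fun m : ℕ => ⋃ t : ℕ, ⋃ _ : m ≤ t, f^[t] ⁻¹' B) := by
      intro m m' h x hx
      simp only [Set.mem_iUnion] at hx ⊢
      obtain ⟨t, ht, htB⟩ := hx
      exact ⟨t, le_trans h ht, htB⟩
    have htend := tendsto_measure_iInter_atTop
      (fun m => (MeasurableSet.iUnion fun t => MeasurableSet.iUnion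
        fun _ => hBm.preimage (hfm.iterate t)).nullMeasurableSet) hanti
      ⟨0, measure_ne_top μ _⟩
    exact lt_of_lt_of_le hBpos (ge_of_tendsto' htend hD)
  have h01 := hf.toPreErgodic.ae_empty_or_univ hItm hinv
  have hIuniv : μ Itᶜ = 0 := by
    rcases h01 with h | h
    · exfalso
      have : μ It = 0 := by
        have := measure_congr h
        simpa using this
      rw [this] at hIpos; exact lt_irrefl _ hIpos
    · exact ae_eq_univ.mp h
  -- the maximal set for g - β''
  set h : X → ℝ := fun y => g y - β'' with hh
  set A : Set X := {x | ∃ n, 1 ≤ n ∧ 0 < birkhoffSum f h n x} with hA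
  have hIA : It ⊆ A := by
    intro x hx
    have hx0 : ∃ t : ℕ, f^[t] x ∈ B := by
      have := Set.mem_iInter.mp hx 0
      simp only [Set.mem_iUnion] at this
      obtain ⟨t, _, htB⟩ := this
      exact ⟨t, htB⟩
    obtain ⟨t, htB⟩ := hx0
    set C : ℝ := birkhoffSum f g t x with hC
    obtain ⟨m₀, hm₀⟩ := exists_nat_gt ((β'' * t - C + 1) / (β' - β''))
    obtain ⟨n, hn1, hn2⟩ := htB (max m₀ 1)
    have hnm : (m₀ : ℝ) ≤ n := by
      have : m₀ ≤ n := le_trans (le_max_left _ _) hn1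
      exact_mod_cast this
    have hn1' : 1 ≤ n := le_trans (le_max_right _ _) hn1
    refine ⟨t + n, by omega, ?_⟩
    have hsum : birkhoffSum f h (t + n) x
        = C + birkhoffSum f g n (f^[t] x) - β'' * (t + n) := by
      rw [hh]
      rw [birkhoffSum_sub_const f g β'' (t+n) x, birkhoffSum_add f g t n x]
      push_cast
      ring
    rw [hsum]
    have key0 := (div_lt_iff₀ (by linarith : (0:ℝ) < β' - β'')).mp hm₀
    have h5 : (m₀ : ℝ) * (β' - β'') ≤ (n : ℝ) * (β' - β'') :=
      mul_le_mul_of_nonneg_right hnm (by linarith)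
    push_cast
    nlinarith
  have hAc : μ Aᶜ = 0 :=
    measure_mono_null (Set.compl_subset_compl.mpr hIA) hIuniv
  have hAm : MeasurableSet A := by
    rw [hA]
    have : {x | ∃ n, 1 ≤ n ∧ 0 < birkhoffSum f h n x}
        = ⋃ n : ℕ, ⋃ _ : 1 ≤ n, {x | 0 < birkhoffSum f h n x} := by
      ext x; simp
    rw [this]
    exact MeasurableSet.iUnion fun n => MeasurableSet.iUnion fun _ =>
      measurableSet_lt measurable_const
        (measurable_birkhoffSum hfm (hgm.sub measurable_const) n)
  have hhi : Integrable h μ := hgi.sub (integrable_const β'')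
  have hME := maximal_ergodic hmp (hgm.sub measurable_const) hhi
  have hsplit : (∫ x in A, h x ∂μ) + ∫ x in Aᶜ, h x ∂μ = ∫ x, h x ∂μ :=
    integral_add_compl hAm hhi
  have hzero : ∫ x in Aᶜ, h x ∂μ = 0 := by
    rw [Measure.restrict_eq_zero.mpr hAc, integral_zero_measure]
  have hint : ∫ x, h x ∂μ = I - β'' := by
    rw [hh]
    rw [integral_sub hgi (integrable_const β''), integral_const]
    simp [hI]
  rw [hzero, add_zero, hint] at hsplit
  have hME' : (0:ℝ) ≤ ∫ x in A, h x ∂μ := hME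
  rw [hsplit] at hME'
  linarith

lemma fekete_lower {C : ℕ → ℝ} (hsub : ∀ k n, C (n + k) ≤ C k + C n) (hC0 : C 0 = 0)
    {lam : ℝ} (hlim : Tendsto (fun n : ℕ => (n : ℝ)⁻¹ * C n) atTop (nhds lam)) :
    ∀ n : ℕ, lam * n ≤ C n := by
  intro n
  rcases Nat.eq_zero_or_pos n with rfl | hn
  · simp [hC0]
  have hq : ∀ q : ℕ, C (q * n) ≤ q * C n := by
    intro q
    induction q with
    | zero => simp [hC0]
    | succ q ih =>
      have h1 : C (q * n + n) ≤ C n + C (q * n) := hsub n (q * n)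
      have e : (q + 1) * n = q * n + n := by ring
      rw [e]
      push_cast
      nlinarith
  have htend : Tendsto (fun q : ℕ => q * n) atTop atTop :=
    Filter.tendsto_atTop_atTop.mpr fun b => ⟨b, fun a ha =>
      le_trans ha (Nat.le_mul_of_pos_right a hn)⟩
  have hsubseq : Tendsto (fun q : ℕ => ((q * n : ℕ) : ℝ)⁻¹ * C (q * n)) atTop (nhds lam) :=
    hlim.comp htend
  have hbound : ∀ᶠ q : ℕ in atTop, ((q * n : ℕ) : ℝ)⁻¹ * C (q * n) ≤ C n / n := by
    filter_upwards [eventually_ge_atTop 1] with q hq1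
    have hq0 : (0:ℝ) < (q:ℝ) := by exact_mod_cast hq1
    have hn0 : (0:ℝ) < (n:ℝ) := by exact_mod_cast hn
    have hqn : (0 : ℝ) < (q : ℝ) * n := by positivity
    have h1 : C (q * n) ≤ q * C n := hq q
    have h2 : ((q * n : ℕ) : ℝ)⁻¹ = ((q : ℝ) * n)⁻¹ := by push_cast; ring_nf
    rw [h2, inv_mul_le_iff₀ hqn]
    calc C (q * n) ≤ q * C n := h1
      _ = (q : ℝ) * n * (C n / n) := by field_simp
  have hle : lam ≤ C n / n := le_of_tendsto hsubseq hbound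
  have hn0 : (0:ℝ) < (n:ℝ) := by exact_mod_cast hn
  calc lam * n ≤ (C n / n) * n := by nlinarith
    _ = C n := by field_simp

lemma iter_mem {Ω : Set X} (hΩf : ∀ x ∈ Ω, f x ∈ Ω) : ∀ x ∈ Ω, ∀ t, f^[t] x ∈ Ω := by
  intro x hx t
  induction t with
  | zero => simpa using hx
  | succ t ih => rw [Function.iterate_succ_apply']; exact hΩf _ ih

lemma block_bound {a : ℕ → X → ℝ} {Ω : Set X} (hΩf : ∀ x ∈ Ω, f x ∈ Ω)
    (hsubA : ∀ x ∈ Ω, ∀ k n, a (n + k) x ≤ a k x + a n (f^[k] x))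
    (n : ℕ) : ∀ (Q r : ℕ), ∀ x ∈ Ω,
    a (Q * n + r) x ≤ (∑ i ∈ Finset.range Q, a n (f^[i * n] x)) + a r (f^[Q * n] x) := by
  intro Q
  induction Q with
  | zero => intro r x _; simp
  | succ Q ih =>
    intro r x hx
    have e1 : (Q + 1) * n + r = (Q * n + r) + n := by ring
    rw [e1]
    have h1 : a ((Q * n + r) + n) x ≤ a n x + a (Q * n + r) (f^[n] x) :=
      hsubA x hx n (Q * n + r)
    have h2 := ih r (f^[n] x) (iter_mem hΩf x hx n)
    have e2 : ∀ i : ℕ, f^[i * n] (f^[n] x) = f^[(i+1) * n] x := by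
      intro i
      rw [← Function.iterate_add_apply]
      congr 1
      ring
    have e3 : (∑ i ∈ Finset.range Q, a n (f^[i * n] (f^[n] x)))
        = ∑ i ∈ Finset.range Q, a n (f^[(i+1) * n] x) :=
      Finset.sum_congr rfl fun i _ => by rw [e2 i]
    rw [e3, e2 Q] at h2
    have e4 : a n x + ∑ i ∈ Finset.range Q, a n (f^[(i+1) * n] x)
        = ∑ i ∈ Finset.range (Q+1), a n (f^[i * n] x) := by
      rw [Finset.sum_range_succ']
      simp [add_comm]
    calc a ((Q * n + r) + n) x ≤ a n x + a (Q * n + r) (f^[n] x) := h1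
      _ ≤ a n x + ((∑ i ∈ Finset.range Q, a n (f^[(i+1) * n] x)) + a r (f^[(Q+1) * n] x)) := by
          linarith
      _ = (∑ i ∈ Finset.range (Q+1), a n (f^[i * n] x)) + a r (f^[(Q+1) * n] x) := by
          rw [← e4]; ring

lemma short_bound {a : ℕ → X → ℝ} {Ω : Set X} (hΩf : ∀ x ∈ Ω, f x ∈ Ω)
    (hΩ0 : ∀ x ∈ Ω, a 0 x = 0)
    (hsubA : ∀ x ∈ Ω, ∀ k n, a (n + k) x ≤ a k x + a n (f^[k] x)) :
    ∀ (r : ℕ), ∀ x ∈ Ω, a r x ≤ ∑ s ∈ Finset.range r, max (a 1 (f^[s] x)) 0 := by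
  intro r
  induction r with
  | zero => intro x hx; simp [hΩ0 x hx]
  | succ r ih =>
    intro x hx
    have h1 : a (r + 1) x ≤ a 1 x + a r (f^[1] x) := hsubA x hx 1 r
    rw [Function.iterate_one] at h1
    have h2 := ih (f x) (hΩf x hx)
    have e : ∑ s ∈ Finset.range (r+1), max (a 1 (f^[s] x)) 0
        = max (a 1 x) 0 + ∑ s ∈ Finset.range r, max (a 1 (f^[s] (f x))) 0 := by
      rw [Finset.sum_range_succ']
      have h : ∀ s, f^[s+1] x = f^[s] (f x) := fun s => Function.iterate_succ_apply f s x
      simp only [h, Function.iterate_zero_apply]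
      ring
    rw [e]
    have h3 : a 1 x ≤ max (a 1 x) 0 := le_max_left _ _
    linarith

lemma birkhoff_mono_of_nonneg {g : X → ℝ} (hg : ∀ y, 0 ≤ g y) {m m' : ℕ} (h : m ≤ m') (x : X) :
    birkhoffSum f g m x ≤ birkhoffSum f g m' x := by
  unfold birkhoffSum
  apply Finset.sum_le_sum_of_subset_of_nonneg (Finset.range_subset_range.mpr h)
  intro i _ _
  exact hg _

lemma window_bound {a : ℕ → X → ℝ} {Ω : Set X} (hΩf : ∀ x ∈ Ω, f x ∈ Ω)
    (hΩ0 : ∀ x ∈ Ω, a 0 x = 0)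
    (hsubA : ∀ x ∈ Ω, ∀ k n, a (n + k) x ≤ a k x + a n (f^[k] x))
    {x : X} (hx : x ∈ Ω) {t r k : ℕ} (h : t + r ≤ k) :
    a r (f^[t] x) ≤ birkhoffSum f (fun y => max (a 1 y) 0) k x
      - birkhoffSum f (fun y => max (a 1 y) 0) t x := by
  set p : X → ℝ := fun y => max (a 1 y) 0 with hp
  have h1 : a r (f^[t] x) ≤ ∑ s ∈ Finset.range r, p (f^[s] (f^[t] x)) :=
    short_bound hΩf hΩ0 hsubA r (f^[t] x) (iter_mem hΩf x hx t)
  have e1 : ∀ s, f^[s] (f^[t] x) = f^[t + s] x := by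
    intro s
    rw [← Function.iterate_add_apply]
    congr 1
    ring
  have h2 : ∑ s ∈ Finset.range r, p (f^[s] (f^[t] x))
      = ∑ u ∈ Finset.Ico t (t + r), p (f^[u] x) := by
    rw [Finset.sum_Ico_eq_sum_range]
    simp only [Nat.add_sub_cancel_left]
    exact (Finset.sum_congr rfl fun s _ => by rw [e1 s]).symm
  have h3 : ∑ u ∈ Finset.Ico t (t + r), p (f^[u] x) ≤ ∑ u ∈ Finset.Ico t k, p (f^[u] x) := by
    apply Finset.sum_le_sum_of_subset_of_nonneg (Finset.Ico_subset_Ico le_rfl h)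
    intro u _ _
    exact le_max_right _ _
  have h4 : ∑ u ∈ Finset.Ico t k, p (f^[u] x)
      = birkhoffSum f p k x - birkhoffSum f p t x := by
    have h5 := Finset.sum_Ico_eq_sub (fun u => p (f^[u] x)) (le_trans (Nat.le_add_right t r) h)
    simpa [birkhoffSum] using h5
  linarith

lemma rect_sum (F : ℕ → ℝ) (n : ℕ) : ∀ Q : ℕ,
    ∑ t ∈ Finset.range (Q * n), F t
      = ∑ j ∈ Finset.range n, ∑ i ∈ Finset.range Q, F (i * n + j) := by
  intro Q
  induction Q with
  | zero => simp
  | succ Q ih =>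
    have e1 : (Q + 1) * n = Q * n + n := by ring
    have e2 : ∑ t ∈ Finset.range (Q * n + n), F t
        = (∑ t ∈ Finset.range (Q * n), F t) + ∑ j ∈ Finset.range n, F (Q * n + j) :=
      Finset.sum_range_add F (Q * n) n
    rw [e1, e2, ih, ← Finset.sum_add_distrib]
    exact Finset.sum_congr rfl fun j _ => by rw [Finset.sum_range_succ]

lemma phase_ineq {a : ℕ → X → ℝ} {Ω : Set X} (hΩf : ∀ x ∈ Ω, f x ∈ Ω)
    (hΩ0 : ∀ x ∈ Ω, a 0 x = 0)
    (hsubA : ∀ x ∈ Ω, ∀ k n, a (n + k) x ≤ a k x + a n (f^[k] x))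
    {x : X} (hx : x ∈ Ω) {n k : ℕ} (hn : 1 ≤ n) (hk : 2 * n ≤ k) :
    (n : ℝ) * a k x ≤ (∑ j ∈ Finset.range n, a j x)
      + birkhoffSum f (a n) ((k / n - 1) * n) x
      + (n : ℝ) * (birkhoffSum f (fun y => max (a 1 y) 0) k x
          - birkhoffSum f (fun y => max (a 1 y) 0) ((k / n - 1) * n) x) := by
  set p : X → ℝ := fun y => max (a 1 y) 0 with hp
  set Q : ℕ := k / n - 1 with hQdef
  set m : ℕ := Q * n with hmdef
  have hn0 : 0 < n := hn
  have hd2 : 2 ≤ k / n := (Nat.le_div_iff_mul_le hn0).mpr (by linarith [hk])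
  have hdm : n * (k / n) + k % n = k := Nat.div_add_mod k n
  have hr : k % n < n := Nat.mod_lt _ hn0
  have e1 : m + n = (k / n) * n := by
    rw [hmdef, hQdef, Nat.sub_one_mul]
    exact Nat.sub_add_cancel (Nat.le_mul_of_pos_left _ (by omega))
  have hmk : m + n + k % n = k := by
    rw [e1, mul_comm]
    exact hdm
  -- per-phase bound
  have phase : ∀ j ∈ Finset.range n,
      a k x ≤ a j x + (∑ i ∈ Finset.range Q, a n (f^[i * n + j] x))
        + (birkhoffSum f p k x - birkhoffSum f p m x) := by
    intro j hjr
    have hj : j < n := Finset.mem_range.mp hjr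
    set r : ℕ := k - j - m with hrdef
    have hjle : m + r = k - j := by omega
    have step1 : a k x ≤ a j x + a (k - j) (f^[j] x) := by
      have := hsubA x hx j (k - j)
      rwa [Nat.sub_add_cancel (by omega : j ≤ k)] at this
    have step2 : a (k - j) (f^[j] x)
        ≤ (∑ i ∈ Finset.range Q, a n (f^[i * n] (f^[j] x))) + a r (f^[m] (f^[j] x)) := by
      have := block_bound hΩf hsubA n Q r (f^[j] x) (iter_mem hΩf x hx j)
      rwa [← hmdef, hjle] at this
    have e2 : ∀ i : ℕ, f^[i * n] (f^[j] x) = f^[i * n + j] x := fun i =>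
      (Function.iterate_add_apply f (i*n) j x).symm
    have e3 : f^[m] (f^[j] x) = f^[m + j] x := (Function.iterate_add_apply f m j x).symm
    rw [e3] at step2
    have step3 : a r (f^[m + j] x) ≤ birkhoffSum f p k x - birkhoffSum f p (m + j) x := by
      apply window_bound hΩf hΩ0 hsubA hx
      omega
    have step4 : birkhoffSum f p (m + j) x ≥ birkhoffSum f p m x :=
      birkhoff_mono_of_nonneg (fun y => le_max_right _ _) (Nat.le_add_right m j) x
    have e4 : (∑ i ∈ Finset.range Q, a n (f^[i * n] (f^[j] x)))
        = ∑ i ∈ Finset.range Q, a n (f^[i * n + j] x) :=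
      Finset.sum_congr rfl fun i _ => by rw [e2 i]
    rw [e4] at step2
    linarith
  have hsum := Finset.sum_le_sum phase
  have lhs_eq : ∑ _j ∈ Finset.range n, a k x = (n : ℝ) * a k x := by
    rw [Finset.sum_const, Finset.card_range, nsmul_eq_mul]
  have rhs_eq : ∑ j ∈ Finset.range n, (a j x + (∑ i ∈ Finset.range Q, a n (f^[i * n + j] x))
        + (birkhoffSum f p k x - birkhoffSum f p m x))
      = (∑ j ∈ Finset.range n, a j x)
        + birkhoffSum f (a n) m x
        + (n : ℝ) * (birkhoffSum f p k x - birkhoffSum f p m x) := by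
    rw [Finset.sum_add_distrib, Finset.sum_add_distrib]
    congr 1
    · congr 1
      have : birkhoffSum f (a n) m x = ∑ t ∈ Finset.range (Q * n), a n (f^[t] x) := rfl
      rw [this, rect_sum (fun t => a n (f^[t] x)) n Q]
    · rw [Finset.sum_const, Finset.card_range, nsmul_eq_mul]
  rw [lhs_eq, rhs_eq] at hsum
  exact hsum


lemma birkhoffSum_neg' (f : X → X) (g : X → ℝ) (n : ℕ) (x : X) :
    birkhoffSum f (fun y => -(g y)) n x = - birkhoffSum f g n x := by
  simp [birkhoffSum]

lemma upper_one (hf : Ergodic f μ) [IsProbabilityMeasure μ]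
    {a : ℕ → X → ℝ} (ham : ∀ n, Measurable (a n)) (hai : ∀ n, Integrable (a n) μ)
    {Ω : Set X} (hΩf : ∀ x ∈ Ω, f x ∈ Ω) (hΩ0 : ∀ x ∈ Ω, a 0 x = 0)
    (hsubA : ∀ x ∈ Ω, ∀ k n, a (n + k) x ≤ a k x + a n (f^[k] x))
    {lam : ℝ} (hlim : Tendsto (fun n : ℕ => (n : ℝ)⁻¹ * ∫ x, a n x ∂μ) atTop (nhds lam))
    {q : ℝ} (hq : 0 < q) :
    ∀ᵐ x ∂μ, x ∈ Ω → ∃ K : ℕ, ∀ k, K ≤ k → a k x ≤ (lam + q) * k := by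
  -- choose a good block length n
  obtain ⟨n, hcn, hn1⟩ :=
    ((hlim.eventually (gt_mem_nhds (show lam < lam + q/2 by linarith))).and
      (eventually_ge_atTop 1)).exists
  have hn0 : 0 < n := hn1
  have hn0R : (0:ℝ) < (n:ℝ) := by exact_mod_cast hn0
  set c : ℝ := ∫ x, a n x ∂μ with hcdef
  have hc : c < (lam + q/2) * (n:ℝ) := by
    have h := (inv_mul_lt_iff₀ hn0R).mp hcn
    linarith [h]
  set p : X → ℝ := fun y => max (a 1 y) 0 with hpdef
  have hpm : Measurable p := (ham 1).max measurable_const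
  have hpi : Integrable p μ := (hai 1).pos_part
  set P : ℝ := ∫ x, p x ∂μ with hPdef
  set s : ℝ := q * n / (4 * (1 + 2 * n)) with hsdef
  have hs : 0 < s := by
    apply div_pos (by positivity) (by positivity)
  have key : s * (1 + 2 * (n:ℝ)) = q * n / 4 := by
    rw [hsdef]
    field_simp
  have hsint : (∫ x, a n x ∂μ) < c + s := by linarith
  have hPint : (∫ x, p x ∂μ) < P + s := by linarith
  have hnPint : (∫ x, (fun y => -(p y)) x ∂μ) < -P + s := by
    rw [integral_neg]; linarith
  clear_value c P s
  have h1 := one_sided hf (ham n) (hai n) hsint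
  have h2 := one_sided hf hpm hpi hPint
  have h3 : μ (freqSet f (fun y => -(p y)) (-P + s)) = 0 :=
    one_sided hf hpm.neg hpi.neg hnPint
  have a1 : ∀ᵐ x ∂μ, x ∉ freqSet f (a n) (c + s) := measure_eq_zero_iff_ae_notMem.mp h1
  have a2 : ∀ᵐ x ∂μ, x ∉ freqSet f p (P + s) := measure_eq_zero_iff_ae_notMem.mp h2
  have a3 : ∀ᵐ x ∂μ, x ∉ freqSet f (fun y => -(p y)) (-P + s) := measure_eq_zero_iff_ae_notMem.mp h3
  filter_upwards [a1, a2, a3] with x hx1 hx2 hx3 hxΩ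
  -- extract eventual bounds
  simp only [freqSet, Set.mem_setOf_eq, not_forall, not_exists, not_and, not_le] at hx1 hx2 hx3
  obtain ⟨M₁, hM₁⟩ := hx1
  obtain ⟨M₂, hM₂⟩ := hx2
  obtain ⟨M₃, hM₃⟩ := hx3
  set H : ℝ := ∑ j ∈ Finset.range n, a j x with hHdef
  set D : ℝ := |H| + 2*(n:ℝ)*|c+s| + 2*(n:ℝ)^2*|P-s| with hDdef
  have hD0 : 0 ≤ D := by rw [hDdef]; positivity
  clear_value H D
  refine ⟨2*n + M₁ + M₂ + M₃ + Nat.ceil (4*D/((n:ℝ)*q)) + 1, ?_⟩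
  intro k hk
  -- natural number bookkeeping
  have hk2n : 2 * n ≤ k := by omega
  set Q : ℕ := k / n - 1 with hQdef
  set m : ℕ := Q * n with hmdef
  have hd2 : 2 ≤ k / n := (Nat.le_div_iff_mul_le hn0).mpr (by linarith [hk2n])
  have hdm : n * (k / n) + k % n = k := Nat.div_add_mod k n
  have hrn : k % n < n := Nat.mod_lt _ hn0
  have e1 : m + n = (k / n) * n := by
    rw [hmdef, hQdef, Nat.sub_one_mul]
    exact Nat.sub_add_cancel (Nat.le_mul_of_pos_left _ (by omega))
  have hmk : m + n + k % n = k := by rw [e1, mul_comm]; exact hdm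
  have hmM₁ : M₁ ≤ m := by omega
  have hmM₃ : M₃ ≤ m := by omega
  have hkM₂ : M₂ ≤ k := by omega
  have hmlek : m ≤ k := by omega
  have hklem : k ≤ m + 2*n := by omega
  have hceil : Nat.ceil (4*D/((n:ℝ)*q)) ≤ k := by omega
  -- real versions
  have hmR : (m:ℝ) ≤ (k:ℝ) := by exact_mod_cast hmlek
  have hkR : (k:ℝ) ≤ (m:ℝ) + 2*(n:ℝ) := by exact_mod_cast hklem
  have hk0R : (0:ℝ) ≤ (k:ℝ) := Nat.cast_nonneg k
  -- the master inequality
  have PI := phase_ineq hΩf hΩ0 hsubA hxΩ hn1 hk2n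
  rw [← hQdef, ← hmdef, ← hpdef, ← hHdef] at PI
  -- Birkhoff bounds
  have b1 : birkhoffSum f (a n) m x < (c + s) * m := hM₁ m hmM₁
  have b2 : birkhoffSum f p k x < (P + s) * k := hM₂ k hkM₂
  have b3 : (P - s) * m < birkhoffSum f p m x := by
    have h := hM₃ m hmM₃
    rw [birkhoffSum_neg'] at h
    linarith
  -- deviation bounds
  have dev1 : (c + s) * (m:ℝ) ≤ (c + s) * k + 2*(n:ℝ)*|c+s| := by
    have h1 : (c+s)*((m:ℝ) - k) ≤ |c+s| * |(m:ℝ) - k| := by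
      calc (c+s)*((m:ℝ) - k) ≤ |(c+s)*((m:ℝ) - k)| := le_abs_self _
        _ = |c+s| * |(m:ℝ) - k| := abs_mul _ _
    have h2 : |(m:ℝ) - k| ≤ 2*(n:ℝ) := abs_le.mpr ⟨by linarith, by linarith⟩
    have h3 : |c+s| * |(m:ℝ) - k| ≤ |c+s| * (2*(n:ℝ)) :=
      mul_le_mul_of_nonneg_left h2 (abs_nonneg _)
    linarith [h1, h3]
  have dev3 : (P - s) * (k:ℝ) - 2*(n:ℝ)*|P-s| ≤ (P - s) * m := by
    have h1 : (P-s)*((k:ℝ) - m) ≤ |P-s| * |(k:ℝ) - m| := by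
      calc (P-s)*((k:ℝ) - m) ≤ |(P-s)*((k:ℝ) - m)| := le_abs_self _
        _ = |P-s| * |(k:ℝ) - m| := abs_mul _ _
    have h2 : |(k:ℝ) - m| ≤ 2*(n:ℝ) := abs_le.mpr ⟨by linarith, by linarith⟩
    have h3 : |P-s| * |(k:ℝ) - m| ≤ |P-s| * (2*(n:ℝ)) :=
      mul_le_mul_of_nonneg_left h2 (abs_nonneg _)
    linarith [h1, h3]
  -- multiply the window bound by n
  have inner : birkhoffSum f p k x - birkhoffSum f p m x
      < 2*s*(k:ℝ) + 2*(n:ℝ)*|P-s| := by linarith [b2, b3, dev3]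
  have t2 : (n:ℝ) * (birkhoffSum f p k x - birkhoffSum f p m x)
      ≤ (n:ℝ) * (2*s*(k:ℝ) + 2*(n:ℝ)*|P-s|) :=
    mul_le_mul_of_nonneg_left inner.le (by positivity)
  -- scalar bounds
  have hH : H ≤ |H| := le_abs_self _
  have hckR : c * (k:ℝ) ≤ ((lam + q/2) * (n:ℝ)) * k :=
    mul_le_mul_of_nonneg_right hc.le hk0R
  have keyk : (s * (1 + 2 * (n:ℝ))) * k = (q * n / 4) * k := by rw [key]
  have hDk : D ≤ (q * (n:ℝ) / 4) * k := by
    have h1 : 4*D/((n:ℝ)*q) ≤ (k:ℝ) := Nat.ceil_le.mp hceil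
    have h2 : (0:ℝ) < (n:ℝ)*q := by positivity
    rw [div_le_iff₀ h2] at h1
    linarith [h1]
  -- final combination
  have final : (n:ℝ) * a k x ≤ (n:ℝ) * ((lam + q) * k) := by
    linarith [PI, b1, dev1, t2, hH, hckR, keyk, hDk, hDdef]
  exact le_of_mul_le_mul_left final hn0R


lemma integral_comp' (hmp : MeasurePreserving f μ μ) {h : X → ℝ}
    (hm : AEStronglyMeasurable h μ) :
    ∫ x, h (f x) ∂μ = ∫ x, h x ∂μ := by
  have e : ∫ x, h x ∂μ = ∫ y, h y ∂(Measure.map f μ) := by rw [hmp.map_eq]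
  rw [e, integral_map hmp.measurable.aemeasurable (by rwa [hmp.map_eq])]

/-- the running maximum `Φ_N(x) = max_{0 ≤ k ≤ N} b_{N-k}(f^k x)` -/
noncomputable def Phi (f : X → X) (b : ℕ → X → ℝ) : ℕ → X → ℝ
  | 0 => fun _ => 0
  | (N+1) => fun x => max (b (N+1) x) (Phi f b N (f x))

section Core

variable {b : ℕ → X → ℝ} {Ω : Set X}


lemma measurable_Phi (hbm : ∀ n, Measurable (b n)) (hfm : Measurable f) (N : ℕ) : Measurable (Phi f b N) := by
  induction N with
  | zero => exact measurable_const
  | succ N ih => exact (hbm (N+1)).max (ih.comp hfm)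

lemma integrable_Phi (hbi : ∀ n, Integrable (b n) μ) (hmp : MeasurePreserving f μ μ) (N : ℕ) : Integrable (Phi f b N) μ := by
  induction N with
  | zero => exact (integrable_zero _ _ _).congr (by rfl)
  | succ N ih =>
    have : Phi f b (N+1) = fun x => max (b (N+1) x) (Phi f b N (f x)) := rfl
    rw [this]
    exact (hbi (N+1)).sup ((hmp.integrable_comp ih.aestronglyMeasurable).mpr ih)

/-- `Φ_N` dominates all the pieces, on `Ω`. -/
lemma piece_le_Phi (hΩf : ∀ x ∈ Ω, f x ∈ Ω) (hΩ0 : ∀ x ∈ Ω, b 0 x = 0) : ∀ N : ℕ, ∀ k ≤ N, ∀ x ∈ Ω, b (N - k) (f^[k] x) ≤ Phi f b N x := by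
  intro N
  induction N with
  | zero =>
    intro k hk x hx
    interval_cases k
    simpa [Phi] using le_of_eq (hΩ0 x hx)
  | succ N ih =>
    intro k hk x hx
    rcases Nat.eq_zero_or_pos k with rfl | hkpos
    · simpa [Phi] using le_max_left _ _
    · obtain ⟨j, rfl⟩ : ∃ j, k = j + 1 := ⟨k - 1, by omega⟩
      have h1 : b (N - j) (f^[j] (f x)) ≤ Phi f b N (f x) :=
        ih j (by omega) (f x) (hΩf x hx)
      have e1 : f^[j] (f x) = f^[j+1] x := (Function.iterate_succ_apply f j x).symm
      have e2 : N + 1 - (j + 1) = N - j := by omega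
      rw [e1] at h1
      rw [e2]
      exact le_trans h1 (le_max_right _ _)

/-- the increment `δ_N = Φ_{N+1} - Φ_N ∘ f` as positive part -/
lemma Phi_succ_eq (N : ℕ) (x : X) :
    Phi f b (N+1) x = Phi f b N (f x) + max (b (N+1) x - Phi f b N (f x)) 0 := by
  have : Phi f b (N+1) x = max (b (N+1) x) (Phi f b N (f x)) := rfl
  rw [this]
  rcases le_total (b (N+1) x) (Phi f b N (f x)) with h | h
  · rw [max_eq_right h, max_eq_right (by linarith), add_zero]
  · rw [max_eq_left h, max_eq_left (by linarith)]
    ring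

noncomputable def delta (f : X → X) (b : ℕ → X → ℝ) (N : ℕ) (x : X) : ℝ :=
  max (b (N+1) x - Phi f b N (f x)) 0

lemma delta_nonneg (N : ℕ) (x : X) : 0 ≤ delta f b N x := le_max_right _ _

lemma measurable_delta (hbm : ∀ n, Measurable (b n)) (hfm : Measurable f) (N : ℕ) : Measurable (delta f b N) :=
  (((hbm (N+1)).sub ((measurable_Phi hbm hfm N).comp hfm)).max measurable_const)

lemma integrable_delta (hbi : ∀ n, Integrable (b n) μ) (hmp : MeasurePreserving f μ μ) (N : ℕ) :
    Integrable (delta f b N) μ := by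
  unfold delta
  exact ((hbi (N+1)).sub ((hmp.integrable_comp
    (integrable_Phi hbi hmp N).aestronglyMeasurable).mpr
      (integrable_Phi hbi hmp N))).pos_part

/-- envelope: on `Ω`, `δ_N ≤ (b 1)⁺`. -/
lemma delta_le (hΩf : ∀ x ∈ Ω, f x ∈ Ω) (hΩ0 : ∀ x ∈ Ω, b 0 x = 0)
    (hsubB : ∀ x ∈ Ω, ∀ k n, b (n + k) x ≤ b k x + b n (f^[k] x))
    (N : ℕ) (x : X) (hx : x ∈ Ω) : delta f b N x ≤ max (b 1 x) 0 := by
  have h1 : b (N+1) x ≤ b 1 x + b N (f^[1] x) := hsubB x hx 1 N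
  rw [Function.iterate_one] at h1
  have h2 : b N (f x) ≤ Phi f b N (f x) := by
    have := piece_le_Phi hΩf hΩ0 N 0 (Nat.zero_le N) (f x) (hΩf x hx)
    simpa using this
  unfold delta
  apply max_le _ (le_max_right _ _)
  have : b (N+1) x - Phi f b N (f x) ≤ b 1 x := by linarith
  exact le_trans this (le_max_left _ _)

/-- integral recursion -/
lemma integral_Phi_succ (hbi : ∀ n, Integrable (b n) μ) (hmp : MeasurePreserving f μ μ) (N : ℕ) :
    ∫ x, Phi f b (N+1) x ∂μ = (∫ x, Phi f b N x ∂μ) + ∫ x, delta f b N x ∂μ := by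
  have e : ∀ x, Phi f b (N+1) x = Phi f b N (f x) + delta f b N x := fun x =>
    Phi_succ_eq (b := b) N x
  have hPhiN := integrable_Phi hbi hmp N
  have hPhif : Integrable (fun x => Phi f b N (f x)) μ :=
    (hmp.integrable_comp hPhiN.aestronglyMeasurable).mpr hPhiN
  calc ∫ x, Phi f b (N+1) x ∂μ = ∫ x, (Phi f b N (f x) + delta f b N x) ∂μ := by
        apply integral_congr_ae
        filter_upwards with x
        exact e x
    _ = (∫ x, Phi f b N (f x) ∂μ) + ∫ x, delta f b N x ∂μ :=
        integral_add hPhif (integrable_delta hbi hmp N)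
    _ = (∫ x, Phi f b N x ∂μ) + ∫ x, delta f b N x ∂μ := by
        rw [integral_comp' hmp hPhiN.aestronglyMeasurable]

lemma integral_Phi_eq_sum (hbi : ∀ n, Integrable (b n) μ) (hmp : MeasurePreserving f μ μ) (N : ℕ) :
    ∫ x, Phi f b N x ∂μ = ∑ M ∈ Finset.range N, ∫ x, delta f b M x ∂μ := by
  induction N with
  | zero => simp [Phi]
  | succ N ih =>
    rw [integral_Phi_succ hbi hmp N, ih, Finset.sum_range_succ]

end Core

/-- strict record points -/
def recPts (f : X → X) (b : ℕ → X → ℝ) : Set X :=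
  {x | ∀ m : ℕ, ∃ M, m ≤ M ∧ 0 < delta f b M x}

def goodTimes (f : X → X) (b : ℕ → X → ℝ) (K c : ℕ) : Set X :=
  {x | ∀ m : ℕ, ∃ N, m ≤ N ∧ ∀ k, K ≤ k → k ≤ N → b (N - k) (f^[k] x) ≤ b N x + c}

def Gstar (f : X → X) (b : ℕ → X → ℝ) : Set X := ⋃ K : ℕ, ⋃ c : ℕ, goodTimes f b K c

section Core2
variable [IsProbabilityMeasure μ] {b : ℕ → X → ℝ} {Ω : Set X} {ν : ℝ}

/-- Step (a): the set of strict record points has positive measure. -/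
lemma recPts_pos (hf : Ergodic f μ) (hbm : ∀ n, Measurable (b n))
    (hbi : ∀ n, Integrable (b n) μ)
    (hΩm : MeasurableSet Ω) (hΩ1 : μ Ω = 1) (hΩf : ∀ x ∈ Ω, f x ∈ Ω)
    (hΩ0 : ∀ x ∈ Ω, b 0 x = 0)
    (hsubB : ∀ x ∈ Ω, ∀ k n, b (n + k) x ≤ b k x + b n (f^[k] x))
    (hν0 : 0 < ν) (hνint : ∀ n : ℕ, ν * n ≤ ∫ x, b n x ∂μ) :
    μ (recPts f b) ≠ 0 := by
  have hfm : Measurable f := hf.toMeasurePreserving.measurable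
  have hmp : MeasurePreserving f μ μ := hf.toMeasurePreserving
  have hΩae : ∀ᵐ x ∂μ, x ∈ Ω := by
    have hc : μ Ωᶜ = 0 := by
      rw [measure_compl hΩm (measure_ne_top μ Ω), hΩ1, measure_univ]
      simp
    rw [ae_iff]
    exact hc
  set g1 : X → ℝ := fun x => max (b 1 x) 0 with hg1
  have hg1m : Measurable g1 := (hbm 1).max measurable_const
  have hg1i : Integrable g1 μ := (hbi 1).pos_part
  have hg1nn : ∀ x, 0 ≤ g1 x := fun x => le_max_right _ _
  set kap : ℕ → X → ℝ := fun N x =>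
    ∑ M ∈ Finset.range N, (if 0 < delta f b M x then (1:ℝ) else 0) with hkap
  have hkapm : ∀ N, Measurable (kap N) := by
    intro N
    apply Finset.measurable_sum
    intro M _
    exact Measurable.ite (measurableSet_lt measurable_const (measurable_delta hbm hfm M))
      measurable_const measurable_const
  have hkapnn : ∀ N x, 0 ≤ kap N x := fun N x =>
    Finset.sum_nonneg fun M _ => by by_cases h : 0 < delta f b M x <;> simp [h]
  have hkapbd : ∀ N x, kap N x ≤ N := by
    intro N x
    calc kap N x ≤ ∑ M ∈ Finset.range N, (1:ℝ) :=
          Finset.sum_le_sum fun M _ => by by_cases h : 0 < delta f b M x <;> simp [h]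
      _ = N := by simp
  have hsum : ∀ᵐ x ∂μ, ∀ N, (∑ M ∈ Finset.range N, delta f b M x) ≤ g1 x * kap N x := by
    filter_upwards [hΩae] with x hx N
    have : ∀ M ∈ Finset.range N, delta f b M x
        ≤ g1 x * (if 0 < delta f b M x then (1:ℝ) else 0) := by
      intro M _
      by_cases h : 0 < delta f b M x
      · rw [if_pos h, mul_one]
        exact delta_le hΩf hΩ0 hsubB M x hx
      · rw [if_neg h, mul_zero]
        exact le_antisymm (not_lt.mp h) (delta_nonneg (f := f) (b := b) M x) ▸ le_refl _
    calc (∑ M ∈ Finset.range N, delta f b M x)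
        ≤ ∑ M ∈ Finset.range N, g1 x * (if 0 < delta f b M x then (1:ℝ) else 0) :=
          Finset.sum_le_sum this
      _ = g1 x * kap N x := by rw [hkap, Finset.mul_sum]
  have hFi : ∀ N : ℕ, Integrable (fun x => g1 x * kap N x) μ := by
    intro N
    apply Integrable.mono' (hg1i.const_mul N) ((hg1m.mul (hkapm N)).aestronglyMeasurable)
    filter_upwards with x
    rw [Real.norm_eq_abs, Pi.mul_apply, abs_of_nonneg (mul_nonneg (hg1nn x) (hkapnn N x))]
    calc g1 x * kap N x ≤ g1 x * N :=
          mul_le_mul_of_nonneg_left (hkapbd N x) (hg1nn x)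
      _ = N * g1 x := by ring
  have hmain : ∀ N : ℕ, ν * N ≤ ∫ x, g1 x * kap N x ∂μ := by
    intro N
    have h1 : ν * N ≤ ∫ x, b N x ∂μ := hνint N
    have h2 : ∫ x, b N x ∂μ ≤ ∫ x, Phi f b N x ∂μ := by
      apply integral_mono_ae (hbi N) (integrable_Phi hbi hmp N)
      filter_upwards [hΩae] with x hx
      have := piece_le_Phi hΩf hΩ0 N 0 (Nat.zero_le N) x hx
      simpa using this
    have h3 : ∫ x, Phi f b N x ∂μ = ∫ x, (∑ M ∈ Finset.range N, delta f b M x) ∂μ := by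
      rw [integral_Phi_eq_sum hbi hmp N, integral_finset_sum]
      intro M _
      exact integrable_delta hbi hmp M
    have h4 : ∫ x, (∑ M ∈ Finset.range N, delta f b M x) ∂μ ≤ ∫ x, g1 x * kap N x ∂μ := by
      apply integral_mono_ae (integrable_finset_sum _ fun M _ => integrable_delta hbi hmp M)
        (hFi N)
      filter_upwards [hsum] with x hx using hx N
    linarith
  -- suppose no records a.e.
  by_contra h0
  have h0' : μ (recPts f b) = 0 := by simpa using h0
  have hae : ∀ᵐ x ∂μ, x ∉ recPts f b := by
    rw [ae_iff]
    simpa using h0'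
  have hten : ∀ᵐ x ∂μ, Tendsto (fun N : ℕ => g1 x * (kap N x / N)) atTop (nhds 0) := by
    filter_upwards [hae] with x hx
    simp only [recPts, Set.mem_setOf_eq, not_forall, not_exists, not_and, not_lt] at hx
    obtain ⟨C, hC⟩ := hx
    have hbdd : ∀ N, kap N x ≤ C := by
      intro N
      have h1 : ∀ M ∈ Finset.range N, (if 0 < delta f b M x then (1:ℝ) else 0)
          ≤ (if M < C then (1:ℝ) else 0) := by
        intro M _
        by_cases h : 0 < delta f b M x
        · have hMC : M < C := by
            by_contra hMC
            exact absurd h (not_lt.mpr (hC M (by omega)))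
          simp [h, hMC]
        · simp only [if_neg h]
          positivity
      calc kap N x ≤ ∑ M ∈ Finset.range N, (if M < C then (1:ℝ) else 0) :=
            Finset.sum_le_sum h1
        _ = ∑ M ∈ (Finset.range N).filter (fun M => M < C), (1:ℝ) :=
            (Finset.sum_filter _ _).symm
        _ ≤ ∑ M ∈ Finset.range C, (1:ℝ) := by
            apply Finset.sum_le_sum_of_subset_of_nonneg
            · intro t ht
              simp only [Finset.mem_filter, Finset.mem_range] at ht ⊢
              exact ht.2
            · intros
              norm_num
        _ = C := by simp
    have hup : ∀ N : ℕ, g1 x * (kap N x / N) ≤ (g1 x * C) / N := by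
      intro N
      rcases Nat.eq_zero_or_pos N with rfl | hN
      · simp
      · have hNR : (0:ℝ) < N := by exact_mod_cast hN
        rw [div_eq_mul_inv, div_eq_mul_inv, mul_assoc]
        apply mul_le_mul_of_nonneg_left _ (hg1nn x)
        apply mul_le_mul_of_nonneg_right (hbdd N)
        positivity
    have hlo : ∀ N : ℕ, 0 ≤ g1 x * (kap N x / N) := fun N =>
      mul_nonneg (hg1nn x) (div_nonneg (hkapnn N x) (Nat.cast_nonneg N))
    have hupt : Tendsto (fun N : ℕ => (g1 x * C) / N) atTop (nhds 0) :=
      tendsto_const_div_atTop_nhds_zero_nat (g1 x * C)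
    exact tendsto_of_tendsto_of_tendsto_of_le_of_le tendsto_const_nhds hupt hlo hup
  have hFmeas : ∀ N : ℕ, AEStronglyMeasurable (fun x => g1 x * (kap N x / N)) μ :=
    fun N => (hg1m.mul ((hkapm N).div_const _)).aestronglyMeasurable
  have hFbd : ∀ N : ℕ, ∀ᵐ x ∂μ, ‖g1 x * (kap N x / N)‖ ≤ g1 x := by
    intro N
    filter_upwards with x
    rw [Real.norm_eq_abs, abs_of_nonneg
      (mul_nonneg (hg1nn x) (div_nonneg (hkapnn N x) (Nat.cast_nonneg N)))]
    rcases Nat.eq_zero_or_pos N with rfl | hN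
    · simp [hg1nn x]
    · have hNR : (0:ℝ) < N := by exact_mod_cast hN
      have h1 : kap N x / N ≤ 1 := by
        rw [div_le_one hNR]
        exact hkapbd N x
      calc g1 x * (kap N x / N) ≤ g1 x * 1 :=
            mul_le_mul_of_nonneg_left h1 (hg1nn x)
        _ = g1 x := mul_one _
  have hDCT := tendsto_integral_of_dominated_convergence g1 hFmeas hg1i hFbd hten
  have hlim0 : Tendsto (fun N : ℕ => ∫ x, g1 x * (kap N x / N) ∂μ) atTop (nhds 0) := by
    simpa using hDCT
  have hev : ∀ᶠ N : ℕ in atTop, ν ≤ ∫ x, g1 x * (kap N x / N) ∂μ := by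
    filter_upwards [eventually_ge_atTop 1] with N hN
    have hNR : (0:ℝ) < N := by exact_mod_cast hN
    have e1 : ∫ x, g1 x * (kap N x / N) ∂μ = (N:ℝ)⁻¹ * ∫ x, g1 x * kap N x ∂μ := by
      rw [← integral_const_mul]
      apply integral_congr_ae
      filter_upwards with x
      rw [div_eq_mul_inv]
      ring
    rw [e1]
    have h2 := mul_le_mul_of_nonneg_left (hmain N) (show (0:ℝ) ≤ (N:ℝ)⁻¹ by positivity)
    have e2 : (N:ℝ)⁻¹ * (ν * N) = ν := by field_simp
    linarith [h2, e2.symm.le, e2.le]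
  have hged := ge_of_tendsto hlim0 hev
  linarith

/-- Step (b): positivity of good points via records. -/
lemma recPts_subset_good (hΩf : ∀ x ∈ Ω, f x ∈ Ω) (hΩ0 : ∀ x ∈ Ω, b 0 x = 0) :
    recPts f b ∩ Ω ⊆ goodTimes f b 1 0 := by
  rintro x ⟨hx, hxΩ⟩
  intro m
  obtain ⟨M, hM1, hM2⟩ := hx m
  refine ⟨M + 1, by omega, ?_⟩
  intro k hk1 hkN
  have hdelta : Phi f b M (f x) < b (M+1) x := by
    by_contra h
    unfold delta at hM2
    rw [max_eq_right (by linarith [not_lt.mp h])] at hM2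
    exact lt_irrefl _ hM2
  obtain ⟨j, rfl⟩ : ∃ j, k = j + 1 := ⟨k - 1, by omega⟩
  have h1 : b (M - j) (f^[j] (f x)) ≤ Phi f b M (f x) :=
    piece_le_Phi hΩf hΩ0 M j (by omega) (f x) (hΩf x hxΩ)
  have e1 : f^[j] (f x) = f^[j+1] x := (Function.iterate_succ_apply f j x).symm
  have e2 : M + 1 - (j + 1) = M - j := by omega
  rw [e1] at h1
  rw [e2]
  push_cast
  linarith

/-- Step (c): forward transport of goodness. -/
lemma good_transport (hΩf : ∀ x ∈ Ω, f x ∈ Ω)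
    (hsubB : ∀ x ∈ Ω, ∀ k n, b (n + k) x ≤ b k x + b n (f^[k] x)) :
    (Gstar f b ∩ Ω) ⊆ f ⁻¹' (Gstar f b ∩ Ω) := by
  rintro x ⟨hxG, hxΩ⟩
  simp only [Gstar, Set.mem_iUnion] at hxG
  obtain ⟨K, c, hgood⟩ := hxG
  refine ⟨?_, hΩf x hxΩ⟩
  simp only [Gstar, Set.mem_iUnion]
  refine ⟨K, c + Nat.ceil (max (b 1 x) 0), ?_⟩
  intro m
  obtain ⟨N, hN1, hN2⟩ := hgood (m + 1)
  refine ⟨N - 1, by omega, ?_⟩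
  intro k hk1 hkN
  have hNpos : 1 ≤ N := by omega
  have h1 : b (N - (k+1)) (f^[k+1] x) ≤ b N x + c := hN2 (k+1) (by omega) (by omega)
  have e1 : f^[k+1] x = f^[k] (f x) := Function.iterate_succ_apply f k x
  have e2 : N - (k + 1) = N - 1 - k := by omega
  rw [e1, e2] at h1
  have h2 : b N x ≤ b 1 x + b (N - 1) (f x) := by
    have := hsubB x hxΩ 1 (N - 1)
    rw [Nat.sub_add_cancel hNpos, Function.iterate_one] at this
    exact this
  have h3 : b 1 x ≤ (Nat.ceil (max (b 1 x) 0) : ℝ) :=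
    le_trans (le_max_left _ _) (Nat.le_ceil _)
  push_cast at h1 ⊢
  linarith

lemma measurableSet_Gstar (hbm : ∀ n, Measurable (b n)) (hfm : Measurable f) :
    MeasurableSet (Gstar f b) := by
  apply MeasurableSet.iUnion
  intro K
  apply MeasurableSet.iUnion
  intro c
  have : goodTimes f b K c = ⋂ m : ℕ, ⋃ N : ℕ, ⋃ _ : m ≤ N,
      ⋂ k : ℕ, ⋂ _ : K ≤ k, ⋂ _ : k ≤ N, {x | b (N - k) (f^[k] x) ≤ b N x + c} := by
    ext x
    simp [goodTimes]
  rw [this]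
  apply MeasurableSet.iInter
  intro m
  apply MeasurableSet.iUnion
  intro N
  apply MeasurableSet.iUnion
  intro _
  apply MeasurableSet.iInter
  intro k
  apply MeasurableSet.iInter
  intro _
  apply MeasurableSet.iInter
  intro _
  exact measurableSet_le ((hbm (N-k)).comp (hfm.iterate k)) ((hbm N).add_const _)

/-- The core theorem: almost every point has good times with some cutoff and constant. -/
theorem core_theorem (hf : Ergodic f μ) (hbm : ∀ n, Measurable (b n))
    (hbi : ∀ n, Integrable (b n) μ)
    (hΩm : MeasurableSet Ω) (hΩ1 : μ Ω = 1) (hΩf : ∀ x ∈ Ω, f x ∈ Ω)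
    (hΩ0 : ∀ x ∈ Ω, b 0 x = 0)
    (hsubB : ∀ x ∈ Ω, ∀ k n, b (n + k) x ≤ b k x + b n (f^[k] x))
    (hν0 : 0 < ν) (hνint : ∀ n : ℕ, ν * n ≤ ∫ x, b n x ∂μ) :
    μ (Gstar f b ∩ Ω) = 1 := by
  have hfm : Measurable f := hf.toMeasurePreserving.measurable
  set G := Gstar f b ∩ Ω with hG
  have hGm : MeasurableSet G := (measurableSet_Gstar hbm hfm).inter hΩm
  have hpos : μ G ≠ 0 := by
    intro hzero
    apply recPts_pos hf hbm hbi hΩm hΩ1 hΩf hΩ0 hsubB hν0 hνint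
    have hsub : recPts f b ⊆ G ∪ Ωᶜ := by
      intro x hx
      by_cases hxΩ : x ∈ Ω
      · left
        refine ⟨?_, hxΩ⟩
        have := recPts_subset_good hΩf hΩ0 (⟨hx, hxΩ⟩ : x ∈ recPts f b ∩ Ω)
        simp only [Gstar, Set.mem_iUnion]
        exact ⟨1, 0, by simpa using this⟩
      · right; exact hxΩ
    have hcompl : μ Ωᶜ = 0 := by
      rw [measure_compl hΩm (measure_ne_top μ Ω), hΩ1, measure_univ]
      simp
    refine le_antisymm ?_ (zero_le)
    calc μ (recPts f b) ≤ μ (G ∪ Ωᶜ) := measure_mono hsub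
      _ ≤ μ G + μ Ωᶜ := measure_union_le _ _
      _ = 0 := by rw [hzero, hcompl, add_zero]
  have hle : G ≤ᵐ[μ] f ⁻¹' G :=
    HasSubset.Subset.eventuallyLE (good_transport hΩf hsubB)
  rcases Ergodic.ae_empty_or_univ_of_ae_le_preimage hf hGm.nullMeasurableSet hle with h | h
  · exfalso
    apply hpos
    have := measure_congr h
    simpa using this
  · have := measure_congr h
    simpa using this

end Core2

end KMproof

open KMproof in
/-- simultaneous Karlsson–Margulis for finitely many integrable subadditive
cocycles `a^{(1)}, …, a^{(m)}` with finite exponents `λ^{(1)}, …, λ^{(m)}`: on a full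
measure set `E`, for every `x ∈ E` and `ε > 0` there is `L` such that the set of `n`
satisfying `a^{(j)}_n(x) − a^{(j)}_{n−i}(f^i x) ≥ (λ^{(j)} − ε)·i` for all `L ≤ i ≤ n`
and all `j` simultaneously is infinite. -/
theorem karlsson_margulis_simultaneous {X : Type*} [MeasurableSpace X]
    (μ : Measure X) [IsProbabilityMeasure μ] (f : X → X) (hf : Ergodic f μ)
    (m : ℕ) (a : Fin m → ℕ → X → ℝ) (ha0 : ∀ j x, a j 0 x = 0)
    (hsub : ∀ (j : Fin m) (x : X) (k n : ℕ), a j (n + k) x ≤ a j k x + a j n (f^[k] x))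
    (hint : ∀ j n, Integrable (a j n) μ) (lam : Fin m → ℝ)
    (hlam : ∀ j, Tendsto (fun n : ℕ => (n : ℝ)⁻¹ * ∫ x, a j n x ∂μ) atTop (nhds (lam j))) :
    ∃ E : Set X, MeasurableSet E ∧ μ E = 1 ∧
      ∀ x ∈ E, ∀ ε > (0 : ℝ), ∃ L : ℕ,
        {n : ℕ | ∀ j : Fin m, ∀ i : ℕ, L ≤ i → i ≤ n →
          (lam j - ε) * (i : ℝ) ≤ a j n x - a j (n - i) (f^[i] x)}.Infinite := by
  rcases Nat.eq_zero_or_pos m with rfl | hm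
  · -- trivial case
    refine ⟨Set.univ, MeasurableSet.univ, measure_univ, ?_⟩
    intro x _ ε _
    refine ⟨0, ?_⟩
    have : {n : ℕ | ∀ j : Fin 0, ∀ i : ℕ, 0 ≤ i → i ≤ n →
        (lam j - ε) * (i : ℝ) ≤ a j n x - a j (n - i) (f^[i] x)} = Set.univ :=
      Set.eq_univ_of_forall (fun n j => j.elim0)
    rw [this]
    exact Set.infinite_univ
  have hfm : Measurable f := hf.toMeasurePreserving.measurable
  have hmp : MeasurePreserving f μ μ := hf.toMeasurePreserving
  -- measurable representatives
  set g : Fin m → ℕ → X → ℝ :=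
    fun j n => (hint j n).aestronglyMeasurable.mk (a j n) with hgdef
  have hgm : ∀ j n, Measurable (g j n) := fun j n =>
    (hint j n).aestronglyMeasurable.stronglyMeasurable_mk.measurable
  have hgeq : ∀ j n, a j n =ᵐ[μ] g j n := fun j n =>
    (hint j n).aestronglyMeasurable.ae_eq_mk
  have hgi : ∀ j n, Integrable (g j n) μ := fun j n => (hint j n).congr (hgeq j n)
  have hgint : ∀ j n, ∫ x, g j n x ∂μ = ∫ x, a j n x ∂μ := fun j n =>
    (integral_congr_ae (hgeq j n)).symm
  -- the orbit-agreement set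
  set Z : Fin m → ℕ → Set X := fun j n => toMeasurable μ {x | a j n x ≠ g j n x} with hZdef
  have hZm : ∀ j n, MeasurableSet (Z j n) := fun j n => measurableSet_toMeasurable _ _
  have hZ0 : ∀ j n, μ (Z j n) = 0 := by
    intro j n
    rw [measure_toMeasurable]
    exact (hgeq j n)
  set Ω : Set X := (⋃ j : Fin m, ⋃ n : ℕ, ⋃ t : ℕ, f^[t] ⁻¹' (Z j n))ᶜ with hΩdef
  have hΩm : MeasurableSet Ω :=
    (MeasurableSet.iUnion fun j => MeasurableSet.iUnion fun n =>
      MeasurableSet.iUnion fun t => (hZm j n).preimage (hfm.iterate t)).compl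
  have hUm : MeasurableSet (⋃ j : Fin m, ⋃ n : ℕ, ⋃ t : ℕ, f^[t] ⁻¹' (Z j n)) :=
    MeasurableSet.iUnion fun j => MeasurableSet.iUnion fun n =>
      MeasurableSet.iUnion fun t => (hZm j n).preimage (hfm.iterate t)
  have hΩ1 : μ Ω = 1 := by
    have h0 : μ (⋃ j : Fin m, ⋃ n : ℕ, ⋃ t : ℕ, f^[t] ⁻¹' (Z j n)) = 0 := by
      refine measure_iUnion_null fun j => measure_iUnion_null fun n =>
        measure_iUnion_null fun t => ?_
      rw [(hmp.iterate t).measure_preimage (hZm j n).nullMeasurableSet]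
      exact hZ0 j n
    rw [hΩdef, measure_compl hUm (measure_ne_top μ _), h0, measure_univ]
    simp
  have hΩf : ∀ x ∈ Ω, f x ∈ Ω := by
    intro x hx
    simp only [hΩdef, Set.mem_compl_iff, Set.mem_iUnion, not_exists, Set.mem_preimage] at hx ⊢
    intro j n t
    rw [← Function.iterate_succ_apply]
    exact hx j n (t + 1)
  have hagree : ∀ x ∈ Ω, ∀ (j : Fin m) (n t : ℕ), a j n (f^[t] x) = g j n (f^[t] x) := by
    intro x hx j n t
    simp only [hΩdef, Set.mem_compl_iff, Set.mem_iUnion, not_exists, Set.mem_preimage] at hx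
    by_contra h
    exact hx j n t (subset_toMeasurable μ _ h)
  have hagree0 : ∀ x ∈ Ω, ∀ (j : Fin m) (n : ℕ), a j n x = g j n x := by
    intro x hx j n
    simpa using hagree x hx j n 0
  -- properties of g on Ω
  have hg0 : ∀ j : Fin m, ∀ x ∈ Ω, g j 0 x = 0 := fun j x hx => by
    rw [← hagree0 x hx j 0]; exact ha0 j x
  have hsubg : ∀ j : Fin m, ∀ x ∈ Ω, ∀ k n, g j (n+k) x ≤ g j k x + g j n (f^[k] x) := by
    intro j x hx k n
    rw [← hagree0 x hx j (n+k), ← hagree0 x hx j k, ← hagree x hx j n k]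
    exact hsub j x k n
  -- Fekete lower bound for the integrals
  have hCsub : ∀ j : Fin m, ∀ k n : ℕ,
      (∫ x, a j (n+k) x ∂μ) ≤ (∫ x, a j k x ∂μ) + ∫ x, a j n x ∂μ := by
    intro j k n
    have h1 : ∀ x, a j (n+k) x ≤ a j k x + a j n (f^[k] x) := fun x => hsub j x k n
    have hcomp : Integrable (fun x => a j n (f^[k] x)) μ :=
      integrable_comp_iterate hmp (hint j n) k
    calc (∫ x, a j (n+k) x ∂μ) ≤ ∫ x, (a j k x + a j n (f^[k] x)) ∂μ :=
          integral_mono (hint j (n+k)) ((hint j k).add hcomp) h1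
      _ = (∫ x, a j k x ∂μ) + ∫ x, a j n (f^[k] x) ∂μ :=
          integral_add (hint j k) hcomp
      _ = _ := by rw [integral_comp_iterate hmp (hint j n).aestronglyMeasurable k]
  have hC0 : ∀ j : Fin m, (∫ x, a j 0 x ∂μ) = 0 := by
    intro j
    calc (∫ x, a j 0 x ∂μ) = ∫ _x, (0:ℝ) ∂μ :=
          integral_congr_ae (by filter_upwards with x; exact ha0 j x)
      _ = 0 := integral_zero _ _
  have hfek : ∀ j : Fin m, ∀ n : ℕ, lam j * n ≤ ∫ x, a j n x ∂μ := fun j =>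
    fekete_lower (fun k n => hCsub j k n) (hC0 j) (hlam j)
  -- the penalized sum cocycles
  set Lam : ℝ := ∑ j, lam j with hLam
  set bfun : ℕ → ℕ → X → ℝ :=
    fun r n x => (∑ j, g j n x) - (Lam - 1/((r:ℝ)+1)) * n with hbdef
  have hbm : ∀ r n, Measurable (bfun r n) := fun r n =>
    (Finset.measurable_sum _ fun j _ => hgm j n).sub measurable_const
  have hbi : ∀ r n, Integrable (bfun r n) μ := fun r n =>
    (integrable_finset_sum _ fun j _ => hgi j n).sub (integrable_const _)
  have hb0 : ∀ r : ℕ, ∀ x ∈ Ω, bfun r 0 x = 0 := by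
    intro r x hx
    simp only [hbdef]
    rw [Finset.sum_congr rfl (fun j _ => hg0 j x hx)]
    simp
  have hbsub : ∀ r : ℕ, ∀ x ∈ Ω, ∀ k n, bfun r (n+k) x ≤ bfun r k x + bfun r n (f^[k] x) := by
    intro r x hx k n
    simp only [hbdef]
    have h1 : (∑ j, g j (n+k) x) ≤ (∑ j, g j k x) + ∑ j, g j n (f^[k] x) := by
      rw [← Finset.sum_add_distrib]
      exact Finset.sum_le_sum fun j _ => hsubg j x hx k n
    push_cast
    linarith [h1]
  have hbint : ∀ r : ℕ, ∀ n : ℕ, (1/((r:ℝ)+1)) * n ≤ ∫ x, bfun r n x ∂μ := by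
    intro r n
    have h1 : ∫ x, bfun r n x ∂μ
        = (∑ j, ∫ x, g j n x ∂μ) - (Lam - 1/((r:ℝ)+1)) * n := by
      simp only [hbdef]
      rw [integral_sub (integrable_finset_sum _ fun j _ => hgi j n) (integrable_const _),
        integral_finset_sum _ (fun j _ => hgi j n), integral_const]
      simp
    rw [h1]
    have h3 : Lam * n ≤ ∑ j, ∫ x, g j n x ∂μ := by
      rw [hLam, Finset.sum_mul]
      refine Finset.sum_le_sum fun j _ => ?_
      rw [hgint]
      exact hfek j n
    linarith [h3]
  have hcore : ∀ r : ℕ, μ (Gstar f (bfun r) ∩ Ω) = 1 := fun r =>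
    core_theorem hf (hbm r) (hbi r) hΩm hΩ1 hΩf (hb0 r) (hbsub r) (by positivity) (hbint r)
  have hup : ∀ (j : Fin m) (r : ℕ), ∀ᵐ x ∂μ, x ∈ Ω →
      ∃ K, ∀ k, K ≤ k → g j k x ≤ (lam j + 1/((r:ℝ)+1)) * k := by
    intro j r
    have hlimg : Tendsto (fun n : ℕ => (n:ℝ)⁻¹ * ∫ x, g j n x ∂μ) atTop (nhds (lam j)) := by
      have e : (fun n : ℕ => (n:ℝ)⁻¹ * ∫ x, g j n x ∂μ)
          = fun n : ℕ => (n:ℝ)⁻¹ * ∫ x, a j n x ∂μ := funext fun n => by rw [hgint j n]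
      rw [e]
      exact hlam j
    exact upper_one hf (hgm j) (hgi j) hΩf (hg0 j) (hsubg j) hlimg (by positivity)
  -- assemble the full measure set
  set S : Fin m → ℕ → Set X := fun j r =>
    {x | ∃ K, ∀ k, K ≤ k → g j k x ≤ (lam j + 1/((r:ℝ)+1)) * k} with hSdef
  have hSm : ∀ j r, MeasurableSet (S j r) := by
    intro j r
    have e : S j r = ⋃ K : ℕ, ⋂ k : ℕ, ⋂ _ : K ≤ k,
        {x | g j k x ≤ (lam j + 1/((r:ℝ)+1)) * k} := by
      ext x
      simp [hSdef]
    rw [e]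
    exact MeasurableSet.iUnion fun K => MeasurableSet.iInter fun k =>
      MeasurableSet.iInter fun _ =>
        measurableSet_le (hgm j k) measurable_const
  have hSc : ∀ j r, μ (S j r)ᶜ = 0 := by
    intro j r
    have hΩae : ∀ᵐ x ∂μ, x ∈ Ω := by
      have hc : μ Ωᶜ = 0 := by
        rw [measure_compl hΩm (measure_ne_top μ Ω), hΩ1, measure_univ]
        simp
      rw [ae_iff]
      exact hc
    have hae : ∀ᵐ x ∂μ, x ∈ S j r := by
      filter_upwards [hup j r, hΩae] with x h1 h2 using h1 h2
    rw [ae_iff] at hae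
    exact hae
  set E : Set X := (Ω ∩ ⋂ r : ℕ, Gstar f (bfun r)) ∩ ⋂ j : Fin m, ⋂ r : ℕ, S j r with hEdef
  have hEm : MeasurableSet E := by
    refine ((hΩm.inter (MeasurableSet.iInter fun r => measurableSet_Gstar (hbm r) hfm)).inter
      (MeasurableSet.iInter fun j => MeasurableSet.iInter fun r => hSm j r))
  have hE1 : μ E = 1 := by
    have hcompl : μ Eᶜ = 0 := by
      have hsubE : Eᶜ ⊆ (Ωᶜ ∪ ⋃ r : ℕ, (Gstar f (bfun r) ∩ Ω)ᶜ)
          ∪ ⋃ j : Fin m, ⋃ r : ℕ, (S j r)ᶜ := by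
        intro y hy
        simp only [hEdef, Set.mem_compl_iff, Set.mem_inter_iff, Set.mem_iInter, not_and,
          not_forall] at hy
        by_cases hyΩ : y ∈ Ω
        · by_cases hyG : ∀ r, y ∈ Gstar f (bfun r)
          · obtain ⟨j, r, hjr⟩ := hy ⟨hyΩ, hyG⟩
            right
            simp only [Set.mem_iUnion, Set.mem_compl_iff]
            exact ⟨j, r, hjr⟩
          · push_neg at hyG
            obtain ⟨r, hr⟩ := hyG
            left; right
            simp only [Set.mem_iUnion, Set.mem_compl_iff, Set.mem_inter_iff]
            exact ⟨r, fun h => hr h.1⟩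
        · left; left; exact hyΩ
      apply measure_mono_null hsubE
      have h1 : μ Ωᶜ = 0 := by
        rw [measure_compl hΩm (measure_ne_top μ Ω), hΩ1, measure_univ]
        simp
      have h2 : ∀ r : ℕ, μ ((Gstar f (bfun r) ∩ Ω)ᶜ) = 0 := by
        intro r
        have hGm : MeasurableSet (Gstar f (bfun r) ∩ Ω) :=
          (measurableSet_Gstar (hbm r) hfm).inter hΩm
        rw [measure_compl hGm (measure_ne_top μ _), hcore r, measure_univ]
        simp
      refine measure_union_null (measure_union_null h1 (measure_iUnion_null h2)) ?_
      exact measure_iUnion_null fun j => measure_iUnion_null fun r => hSc j r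
    have hcompl' := measure_compl hEm (measure_ne_top μ E)
    rw [hcompl, measure_univ] at hcompl'
    exact le_antisymm prob_le_one (tsub_eq_zero_iff_le.mp hcompl'.symm)
  refine ⟨E, hEm, hE1, ?_⟩
  intro x hx ε hε
  obtain ⟨⟨hxΩ, hxG⟩, hxS⟩ := hx
  obtain ⟨r, hr⟩ := exists_nat_one_div_lt (show (0:ℝ) < ε/(2*m) by
    have : (0:ℝ) < (m:ℝ) := by exact_mod_cast hm
    positivity)
  have hm0 : (0:ℝ) < (m:ℝ) := by exact_mod_cast hm
  have hrm : (m:ℝ) * (1/((r:ℝ)+1)) < ε/2 := by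
    have h1 : (1:ℝ)/((r:ℝ)+1) < ε/(2*m) := by exact_mod_cast hr
    calc (m:ℝ) * (1/((r:ℝ)+1)) < (m:ℝ) * (ε/(2*m)) := by
          exact mul_lt_mul_of_pos_left h1 hm0
      _ = ε/2 := by field_simp
  have hxG_r := Set.mem_iInter.mp hxG r
  simp only [Gstar, Set.mem_iUnion] at hxG_r
  obtain ⟨K, c, hgood⟩ := hxG_r
  have hxS' : ∀ j : Fin m, ∃ K', ∀ k, K' ≤ k →
      g j k x ≤ (lam j + 1/((r:ℝ)+1)) * k :=
    fun j => Set.mem_iInter.mp (Set.mem_iInter.mp hxS j) r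
  choose KU hKU using hxS'
  set L : ℕ := max (max K (Finset.univ.sup KU)) (max 1 (Nat.ceil (2*(c:ℝ)/ε))) with hLdef
  refine ⟨L, ?_⟩
  apply Set.infinite_of_not_bddAbove
  rintro ⟨ub, hub⟩
  obtain ⟨N, hN1, hN2⟩ := hgood (ub + 1)
  have hNmem : N ∈ {n : ℕ | ∀ j : Fin m, ∀ i : ℕ, L ≤ i → i ≤ n →
      (lam j - ε) * (i : ℝ) ≤ a j n x - a j (n - i) (f^[i] x)} := by
    simp only [Set.mem_setOf_eq]
    intro j i hi1 hi2
    have hiK : K ≤ i := le_trans (le_trans (le_max_left _ _) (le_max_left _ _)) hi1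
    have hgoodi := hN2 i hiK hi2
    have hcast : ((N - i : ℕ) : ℝ) = (N:ℝ) - i := by
      rw [Nat.cast_sub hi2]
    have hsumineq : (Lam - 1/((r:ℝ)+1)) * i - c
        ≤ ∑ j' : Fin m, (g j' N x - g j' (N-i) (f^[i] x)) := by
      simp only [hbdef] at hgoodi
      rw [hcast] at hgoodi
      rw [Finset.sum_sub_distrib]
      nlinarith [hgoodi]
    have hperj : ∀ j' : Fin m, g j' N x - g j' (N-i) (f^[i] x) ≤ g j' i x := by
      intro j'
      have h := hsubg j' x hxΩ i (N - i)
      rw [Nat.sub_add_cancel hi2] at h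
      linarith
    have hupj : ∀ j' : Fin m, g j' N x - g j' (N-i) (f^[i] x)
        ≤ (lam j' + 1/((r:ℝ)+1)) * i := by
      intro j'
      refine le_trans (hperj j') (hKU j' i ?_)
      exact le_trans (le_trans (Finset.le_sup (Finset.mem_univ j'))
        (le_trans (le_max_right _ _) (le_max_left _ _))) hi1
    have hsplit : g j N x - g j (N-i) (f^[i] x)
        = (∑ j' : Fin m, (g j' N x - g j' (N-i) (f^[i] x)))
          - ∑ j' ∈ Finset.univ.erase j, (g j' N x - g j' (N-i) (f^[i] x)) := by
      rw [← Finset.add_sum_erase _ _ (Finset.mem_univ j)]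
      ring
    have herase : ∑ j' ∈ Finset.univ.erase j, (g j' N x - g j' (N-i) (f^[i] x))
        ≤ ∑ j' ∈ Finset.univ.erase j, (lam j' + 1/((r:ℝ)+1)) * i :=
      Finset.sum_le_sum fun j' _ => hupj j'
    have heraseval : ∑ j' ∈ Finset.univ.erase j, (lam j' + 1/((r:ℝ)+1)) * i
        = ((Lam - lam j) + ((m:ℝ) - 1) * (1/((r:ℝ)+1))) * i := by
      have h1 : ∑ j' ∈ Finset.univ.erase j, lam j' = Lam - lam j := by
        rw [hLam, ← Finset.add_sum_erase _ _ (Finset.mem_univ j)]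
        ring
      have h2 : (Finset.univ.erase j).card = m - 1 := by
        rw [Finset.card_erase_of_mem (Finset.mem_univ j), Finset.card_univ, Fintype.card_fin]
      rw [← Finset.sum_mul, Finset.sum_add_distrib, Finset.sum_const, h1, h2, nsmul_eq_mul]
      have h3 : ((m - 1 : ℕ):ℝ) = (m:ℝ) - 1 := by
        rw [Nat.cast_sub (by omega : 1 ≤ m)]
        simp
      rw [h3]
    have hiR0 : (0:ℝ) ≤ (i:ℝ) := Nat.cast_nonneg i
    have hcle : (c:ℝ) ≤ (ε/2) * i := by
      have h1 : Nat.ceil (2*(c:ℝ)/ε) ≤ i :=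
        le_trans (le_trans (le_max_right _ _) (le_max_right _ _)) hi1
      have h2 : 2*(c:ℝ)/ε ≤ (i:ℝ) := Nat.ceil_le.mp h1
      rw [div_le_iff₀ hε] at h2
      linarith
    have hmqi : (m:ℝ) * (1/((r:ℝ)+1)) * i ≤ (ε/2) * i :=
      mul_le_mul_of_nonneg_right hrm.le hiR0
    have hclean : (lam j - ε) * i ≤ g j N x - g j (N-i) (f^[i] x) := by
      rw [hsplit]
      have h4 := le_trans herase (le_of_eq heraseval)
      nlinarith [hsumineq, h4, hcle, hmqi]
    have e1 : a j N x = g j N x := hagree0 x hxΩ j N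
    have e2 : a j (N-i) (f^[i] x) = g j (N-i) (f^[i] x) := hagree x hxΩ j (N-i) i
    rw [e1, e2]
    exact hclean
  have := hub hNmem
  omega
end

section
/- Let (X,dist) be a metric space, f : X → X a map, G ⊆ X, and x ∈ X a point such that for every r > 0 there exists t > 0 with (1/n)·|{ i : 0 ≤ i ≤ n−1 and f^i x ∈ G ∩ B(x,r) }| → t as n → ∞, where B(x,r) is the open ball of radius r about x. Then for every β > 0 and every σ > 0 there exists an integer N such that for each integer n ≥ N there is an integer k satisfying n(1+σ) ≤ k ≤ n(1+2σ), f^k x ∈ G, and dist(x, f^k x) < β. -/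
open Filter Metric Topology

open scoped Classical in
/-- if the orbit of `x` visits `G ∩ B(x,r)` with positive asymptotic frequency
for every `r > 0`, then for all `β > 0` and `σ > 0` there is `N` such that for every
`n ≥ N` there is `k` with `n(1+σ) ≤ k ≤ n(1+2σ)`, `f^k x ∈ G` and `dist(x, f^k x) < β`. -/
theorem good_return_times {X : Type*} [MetricSpace X] (f : X → X) (G : Set X) (x : X)
    (hx : ∀ r > (0 : ℝ), ∃ t > (0 : ℝ),
      Tendsto (fun n : ℕ => (n : ℝ)⁻¹ *
        (((Finset.range n).filter (fun i => f^[i] x ∈ G ∩ Metric.ball x r)).card : ℝ))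
        atTop (nhds t)) :
    ∀ β > (0 : ℝ), ∀ σ > (0 : ℝ), ∃ N : ℕ, ∀ n : ℕ, N ≤ n → ∃ k : ℕ,
      (n : ℝ) * (1 + σ) ≤ (k : ℝ) ∧ (k : ℝ) ≤ (n : ℝ) * (1 + 2 * σ) ∧
      f^[k] x ∈ G ∧ dist x (f^[k] x) < β := by
  intro β hβ σ hσ
  obtain ⟨t, ht, htend⟩ := hx β hβ
  set a : ℕ → ℕ := fun n =>
    ((Finset.range n).filter (fun i => f^[i] x ∈ G ∩ Metric.ball x β)).card with ha
  set ε : ℝ := t * σ / (4 * (3 + 3 * σ)) with hε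
  have hεpos : 0 < ε := by positivity
  obtain ⟨M, hM⟩ := (Metric.tendsto_atTop.mp htend) ε hεpos
  have hbound : ∀ m : ℕ, M ≤ m → 1 ≤ m →
      (t - ε) * m < (a m : ℝ) ∧ (a m : ℝ) < (t + ε) * m := by
    intro m hm hm1
    have h1 := hM m hm
    rw [Real.dist_eq] at h1
    have hmpos : (0:ℝ) < m := by exact_mod_cast hm1
    rw [inv_mul_eq_div, abs_lt] at h1
    constructor
    · rw [← lt_div_iff₀ hmpos]; linarith [h1.1]
    · rw [← div_lt_iff₀ hmpos]; linarith [h1.2]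
  refine ⟨max (max M 2) ⌈(2:ℝ)/σ⌉₊, fun n hn => ?_⟩
  have hnM : M ≤ n := le_trans (le_trans (le_max_left _ _) (le_max_left _ _)) hn
  have hn2 : 2 ≤ n := le_trans (le_trans (le_max_right _ _) (le_max_left _ _)) hn
  have hnc : ⌈(2:ℝ)/σ⌉₊ ≤ n := le_trans (le_max_right _ _) hn
  have hn2R : (2:ℝ) ≤ n := by exact_mod_cast hn2
  have hnpos : (0:ℝ) < n := by linarith
  have hnσ : (2:ℝ) ≤ n * σ := by
    have : (2:ℝ)/σ ≤ n := by
      have := Nat.ceil_le.mp (le_refl ⌈(2:ℝ)/σ⌉₊)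
      calc (2:ℝ)/σ ≤ (⌈(2:ℝ)/σ⌉₊ : ℝ) := Nat.le_ceil _
        _ ≤ n := by exact_mod_cast hnc
    rw [div_le_iff₀ hσ] at this
    linarith
  set k1 : ℕ := ⌈(n:ℝ) * (1 + σ)⌉₊ with hk1def
  set K : ℕ := ⌊(n:ℝ) * (1 + 2*σ)⌋₊ with hKdef
  have hy1 : (0:ℝ) ≤ (n:ℝ) * (1 + σ) := by positivity
  have hy2 : (0:ℝ) ≤ (n:ℝ) * (1 + 2*σ) := by positivity
  have hk1l : (n:ℝ) * (1 + σ) ≤ k1 := Nat.le_ceil _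
  have hk1u : (k1:ℝ) ≤ (n:ℝ) * (1 + σ) + 1 := le_of_lt (Nat.ceil_lt_add_one hy1)
  have hKu : (K:ℝ) ≤ (n:ℝ) * (1 + 2*σ) := Nat.floor_le hy2
  have hKl : (n:ℝ) * (1 + 2*σ) < (K:ℝ) + 1 := Nat.lt_floor_add_one _
  have hk1K : k1 ≤ K := by
    apply Nat.le_floor
    linarith
  have hMk1 : M ≤ k1 := by
    refine le_trans hnM ?_
    have : (n:ℝ) ≤ (k1:ℝ) := by nlinarith
    exact_mod_cast this
  by_contra h
  push_neg at h
  have hempty : (Finset.Ico k1 (K+1)).filter (fun i => f^[i] x ∈ G ∩ Metric.ball x β) = ∅ := by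
    rw [Finset.filter_eq_empty_iff]
    intro i hi
    rw [Finset.mem_Ico] at hi
    intro hmem
    have hiL : (n:ℝ) * (1 + σ) ≤ (i:ℝ) := le_trans hk1l (by exact_mod_cast hi.1)
    have hiU : (i:ℝ) ≤ (n:ℝ) * (1 + 2*σ) := by
      have : (i:ℝ) ≤ (K:ℝ) := by exact_mod_cast Nat.lt_succ_iff.mp hi.2
      linarith
    obtain ⟨hG, hball⟩ := hmem
    rw [Metric.mem_ball, dist_comm] at hball
    exact absurd hball (not_lt.mpr (h i hiL hiU hG))
  have haeq : a (K+1) = a k1 := by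
    have hsplit : Finset.range (K+1) = Finset.range k1 ∪ Finset.Ico k1 (K+1) := by
      ext i
      simp only [Finset.mem_range, Finset.mem_union, Finset.mem_Ico]
      omega
    have hdisj : Disjoint (Finset.range k1) (Finset.Ico k1 (K+1)) := by
      rw [Finset.range_eq_Ico]
      exact Finset.Ico_disjoint_Ico_consecutive 0 k1 (K+1)
    simp only [ha]
    rw [hsplit, Finset.filter_union, Finset.card_union_of_disjoint
      (Finset.disjoint_filter_filter hdisj), hempty]
    simp
  have hb1 := hbound (K+1) (le_trans hMk1 (Nat.le_succ_of_le hk1K)) (Nat.succ_le_succ (Nat.zero_le _))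
  have hk11 : 1 ≤ k1 := by
    have : (1:ℝ) ≤ (k1:ℝ) := by nlinarith
    exact_mod_cast this
  have hb2 := hbound k1 hMk1 hk11
  have hK1cast : ((K+1 : ℕ):ℝ) = (K:ℝ) + 1 := by push_cast; ring
  rw [haeq, hK1cast] at hb1
  have key : (t - ε) * ((K:ℝ) + 1) < (t + ε) * k1 := lt_trans hb1.1 hb2.2
  have hεeq : ε * (4 * (3 + 3 * σ)) = t * σ := by
    rw [hε]; field_simp
  nlinarith [mul_pos ht hσ, mul_pos hnpos (mul_pos ht hσ), hεpos, hk1u, hKl, hKu, hk1l,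
    mul_le_mul_of_nonneg_left hn2R (le_of_lt hεpos)]
end

section
/- Let V be a Banach space, f : X → X a bijection of a set X, A : X → GL(V) a map with cocycle A^n_x (n ∈ ℤ), and let λ₋ ≤ λ₊ be reals and ε > 0. Fix a point x ∈ X and suppose that for every u ∈ V and every point y in the f-orbit of x, both series in N_y(u) := Σ_{n≥0} ‖A^n_y u‖·e^{−(λ₊+ε)n} + Σ_{n≥1} ‖A^{−n}_y u‖·e^{(λ₋−ε)n} converge. Then: (i) N_y(u) ≥ ‖u‖ for every u ∈ V and every y in the orbit of x; (ii) N_{fx}(A(x)u) ≤ e^{λ₊+ε}·N_x(u) for every u ∈ V; (iii) N_x(A(x)^{-1}w) ≤ e^{−λ₋+ε}·N_{fx}(w) for every w ∈ V. Consequently, N_{f^n x}(A^n_x u) ≤ e^{n(λ₊+ε)}·N_x(u) and N_x((A^n_x)^{-1}w) ≤ e^{n(−λ₋+ε)}·N_{f^n x}(w) for all n ≥ 1. -/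
open Filter Topology

/-- The cocycle generated by `A : X → GL(V)` over `f`. -/
noncomputable def cocycle {X : Type*} {V : Type*} [NormedAddCommGroup V] [NormedSpace ℝ V]
    (f : X → X) (A : X → (V →L[ℝ] V)ˣ) : ℕ → X → (V →L[ℝ] V)ˣ
  | 0, _ => 1
  | n + 1, x => cocycle f A n (f x) * A x

/-- The Lyapunov norm at `y` associated with the data `(λ₊, λ₋, ε)`:
`N_y(u) = Σ_{n≥0} ‖A^n_y u‖ e^{−(λ₊+ε)n} + Σ_{n≥1} ‖A^{−n}_y u‖ e^{(λ₋−ε)n}`,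
where `A^{−n}_y = (A^n_{f^{−n}y})⁻¹`. -/
noncomputable def lyapNorm {X : Type*} {V : Type*} [NormedAddCommGroup V] [NormedSpace ℝ V]
    (f : X ≃ X) (A : X → (V →L[ℝ] V)ˣ) (lp lm ε : ℝ) (y : X) (u : V) : ℝ :=
  (∑' n : ℕ, ‖(cocycle (⇑f) A n y).val u‖ * Real.exp (-(lp + ε) * (n : ℝ))) +
    ∑' n : ℕ, ‖((cocycle (⇑f) A (n + 1) ((⇑f.symm)^[n + 1] y))⁻¹ : (V →L[ℝ] V)ˣ).val u‖ *
      Real.exp ((lm - ε) * ((n : ℝ) + 1))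

section helpers
variable {X V : Type*} [NormedAddCommGroup V] [NormedSpace ℝ V]

lemma units_inv_apply_apply (u : (V →L[ℝ] V)ˣ) (v : V) :
    ((u⁻¹ : (V →L[ℝ] V)ˣ) : V →L[ℝ] V) ((u : V →L[ℝ] V) v) = v := by
  rw [← ContinuousLinearMap.mul_apply, ← Units.val_mul, inv_mul_cancel, Units.val_one,
    ContinuousLinearMap.one_apply]

lemma units_apply_inv_apply (u : (V →L[ℝ] V)ˣ) (v : V) :
    ((u : (V →L[ℝ] V)ˣ) : V →L[ℝ] V) (((u⁻¹ : (V →L[ℝ] V)ˣ) : V →L[ℝ] V) v) = v := by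
  rw [← ContinuousLinearMap.mul_apply, ← Units.val_mul, mul_inv_cancel, Units.val_one,
    ContinuousLinearMap.one_apply]

lemma cocycle_succ (f : X → X) (A : X → (V →L[ℝ] V)ˣ) (n : ℕ) (x : X) :
    cocycle f A (n + 1) x = cocycle f A n (f x) * A x := rfl

lemma cocycle_succ' (f : X → X) (A : X → (V →L[ℝ] V)ˣ) (n : ℕ) :
    ∀ x : X, cocycle f A (n + 1) x = A (f^[n] x) * cocycle f A n x := by
  induction n with
  | zero => intro x; simp [cocycle]
  | succ n ih =>
      intro x
      rw [cocycle_succ f A (n + 1) x, ih (f x), mul_assoc, ← cocycle_succ f A n x,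
        ← Function.iterate_succ_apply]

lemma iterate_symm_iterate (f : X ≃ X) (n : ℕ) (y : X) :
    (⇑f)^[n] ((⇑f.symm)^[n] y) = y := by
  induction n with
  | zero => simp
  | succ n ih =>
      rw [Function.iterate_succ_apply, Function.iterate_succ_apply',
        Equiv.apply_symm_apply, ih]

lemma symm_iterate_apply (f : X ≃ X) (n : ℕ) (y : X) :
    (⇑f.symm)^[n + 1] (f y) = (⇑f.symm)^[n] y := by
  rw [Function.iterate_succ_apply, Equiv.symm_apply_apply]

/-- The forward series terms. -/
noncomputable def spF (f : X ≃ X) (A : X → (V →L[ℝ] V)ˣ) (lp ε : ℝ) (y : X) (u : V) :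
    ℕ → ℝ :=
  fun n => ‖(cocycle (⇑f) A n y).val u‖ * Real.exp (-(lp + ε) * (n : ℝ))

/-- The backward series terms. -/
noncomputable def smF (f : X ≃ X) (A : X → (V →L[ℝ] V)ˣ) (lm ε : ℝ) (y : X) (u : V) :
    ℕ → ℝ :=
  fun n => ‖((cocycle (⇑f) A (n + 1) ((⇑f.symm)^[n + 1] y))⁻¹ : (V →L[ℝ] V)ˣ).val u‖ *
      Real.exp ((lm - ε) * ((n : ℝ) + 1))

lemma lyapNorm_eq (f : X ≃ X) (A : X → (V →L[ℝ] V)ˣ) (lp lm ε : ℝ) (y : X) (u : V) :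
    lyapNorm f A lp lm ε y u
      = (∑' n : ℕ, spF f A lp ε y u n) + ∑' n : ℕ, smF f A lm ε y u n := rfl

lemma spF_nonneg (f : X ≃ X) (A : X → (V →L[ℝ] V)ˣ) (lp ε : ℝ) (y : X) (u : V) (n : ℕ) :
    0 ≤ spF f A lp ε y u n := mul_nonneg (norm_nonneg _) (Real.exp_pos _).le

lemma smF_nonneg (f : X ≃ X) (A : X → (V →L[ℝ] V)ˣ) (lm ε : ℝ) (y : X) (u : V) (n : ℕ) :
    0 ≤ smF f A lm ε y u n := mul_nonneg (norm_nonneg _) (Real.exp_pos _).le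

lemma spF_zero (f : X ≃ X) (A : X → (V →L[ℝ] V)ˣ) (lp ε : ℝ) (y : X) (u : V) :
    spF f A lp ε y u 0 = ‖u‖ := by
  simp [spF, cocycle]

/-- P1 -/
lemma spF_step (f : X ≃ X) (A : X → (V →L[ℝ] V)ˣ) (lp ε : ℝ) (y : X) (u : V) (n : ℕ) :
    spF f A lp ε (f y) ((A y).val u) n = Real.exp (lp + ε) * spF f A lp ε y u (n + 1) := by
  have h : (cocycle (⇑f) A n (f y)).val ((A y).val u) = (cocycle (⇑f) A (n + 1) y).val u := by
    rw [cocycle_succ, Units.val_mul, ContinuousLinearMap.mul_apply]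
  unfold spF
  rw [h]
  push_cast
  rw [show -(lp + ε) * (n : ℝ) = (lp + ε) + -(lp + ε) * ((n : ℝ) + 1) by ring, Real.exp_add]
  ring

/-- P2 -/
lemma smF_step (f : X ≃ X) (A : X → (V →L[ℝ] V)ˣ) (lm ε : ℝ) (y : X) (u : V) (n : ℕ) :
    smF f A lm ε (f y) ((A y).val u) n
      = ‖((cocycle (⇑f) A n ((⇑f.symm)^[n] y))⁻¹ : (V →L[ℝ] V)ˣ).val u‖ *
          Real.exp ((lm - ε) * ((n : ℝ) + 1)) := by
  unfold smF
  rw [symm_iterate_apply]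
  congr 2
  rw [cocycle_succ' (⇑f) A n, iterate_symm_iterate, mul_inv_rev, Units.val_mul,
    ContinuousLinearMap.mul_apply, units_inv_apply_apply]

lemma smF_step_zero (f : X ≃ X) (A : X → (V →L[ℝ] V)ˣ) (lm ε : ℝ) (y : X) (u : V) :
    smF f A lm ε (f y) ((A y).val u) 0 = Real.exp (lm - ε) * ‖u‖ := by
  rw [smF_step]
  simp [cocycle]
  ring

lemma smF_step_succ (f : X ≃ X) (A : X → (V →L[ℝ] V)ˣ) (lm ε : ℝ) (y : X) (u : V) (n : ℕ) :
    smF f A lm ε (f y) ((A y).val u) (n + 1) = Real.exp (lm - ε) * smF f A lm ε y u n := by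
  rw [smF_step]
  unfold smF
  push_cast
  rw [show (lm - ε) * ((n : ℝ) + 1 + 1) = (lm - ε) + (lm - ε) * ((n : ℝ) + 1) by ring,
    Real.exp_add]
  ring

/-- P3 -/
lemma spF_inv_succ (f : X ≃ X) (A : X → (V →L[ℝ] V)ˣ) (lp ε : ℝ) (y : X) (w : V) (n : ℕ) :
    spF f A lp ε y (((A y)⁻¹ : (V →L[ℝ] V)ˣ).val w) (n + 1)
      = Real.exp (-(lp + ε)) * spF f A lp ε (f y) w n := by
  have h : (cocycle (⇑f) A (n + 1) y).val (((A y)⁻¹ : (V →L[ℝ] V)ˣ).val w)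
      = (cocycle (⇑f) A n (f y)).val w := by
    rw [cocycle_succ, Units.val_mul, ContinuousLinearMap.mul_apply, units_apply_inv_apply]
  unfold spF
  rw [h]
  push_cast
  rw [show -(lp + ε) * ((n : ℝ) + 1) = -(lp + ε) + -(lp + ε) * (n : ℝ) by ring, Real.exp_add]
  ring

/-- P4 -/
lemma smF_inv (f : X ≃ X) (A : X → (V →L[ℝ] V)ˣ) (lm ε : ℝ) (y : X) (w : V) (n : ℕ) :
    smF f A lm ε y (((A y)⁻¹ : (V →L[ℝ] V)ˣ).val w) n
      = Real.exp (-(lm - ε)) * smF f A lm ε (f y) w (n + 1) := by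
  have h : ((cocycle (⇑f) A (n + 1) ((⇑f.symm)^[n + 1] y))⁻¹ : (V →L[ℝ] V)ˣ).val
        (((A y)⁻¹ : (V →L[ℝ] V)ˣ).val w)
      = ((cocycle (⇑f) A (n + 2) ((⇑f.symm)^[n + 2] (f y)))⁻¹ : (V →L[ℝ] V)ˣ).val w := by
    rw [symm_iterate_apply f (n + 1) y,
      show n + 2 = (n + 1) + 1 from rfl, cocycle_succ' (⇑f) A (n + 1),
      iterate_symm_iterate f (n + 1) y, mul_inv_rev, Units.val_mul,
      ContinuousLinearMap.mul_apply]
  unfold smF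
  rw [show n + 1 + 1 = n + 2 from rfl, ← h]
  push_cast
  rw [show (lm - ε) * ((n : ℝ) + 1) = -(lm - ε) + (lm - ε) * ((n : ℝ) + 1 + 1) by ring,
    Real.exp_add]
  ring

lemma smF_fy_zero (f : X ≃ X) (A : X → (V →L[ℝ] V)ˣ) (lm ε : ℝ) (y : X) (w : V) :
    smF f A lm ε (f y) w 0 = ‖((A y)⁻¹ : (V →L[ℝ] V)ˣ).val w‖ * Real.exp (lm - ε) := by
  simp [smF, cocycle]

end helpers

section steps
variable {X V : Type*} [NormedAddCommGroup V] [NormedSpace ℝ V]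

lemma lyap_lower (f : X ≃ X) (A : X → (V →L[ℝ] V)ˣ) (lp lm ε : ℝ) (y : X) (u : V)
    (h1 : Summable (spF f A lp ε y u)) :
    ‖u‖ ≤ lyapNorm f A lp lm ε y u := by
  rw [lyapNorm_eq]
  have h0 : spF f A lp ε y u 0 ≤ ∑' n, spF f A lp ε y u n :=
    Summable.le_tsum h1 0 (fun j _ => spF_nonneg f A lp ε y u j)
  have h2 : 0 ≤ ∑' n, smF f A lm ε y u n := tsum_nonneg (smF_nonneg f A lm ε y u)
  rw [spF_zero] at h0
  linarith

lemma step_plus (f : X ≃ X) (A : X → (V →L[ℝ] V)ˣ) {lp lm ε : ℝ}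
    (hll : lm ≤ lp) (hε : 0 < ε) (y : X) (u : V)
    (h1 : Summable (spF f A lp ε y u)) (h2 : Summable (smF f A lm ε y u)) :
    lyapNorm f A lp lm ε (f y) ((A y).val u) ≤ Real.exp (lp + ε) * lyapNorm f A lp lm ε y u := by
  have e1 : ∑' n : ℕ, spF f A lp ε y u (n + 1) = (∑' n, spF f A lp ε y u n) - ‖u‖ := by
    rw [Summable.tsum_eq_zero_add h1, spF_zero]; ring
  have hp : ∑' n : ℕ, spF f A lp ε (f y) ((A y).val u) n
      = Real.exp (lp + ε) * (∑' n, spF f A lp ε y u n) - Real.exp (lp + ε) * ‖u‖ := by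
    rw [tsum_congr (spF_step f A lp ε y u), tsum_mul_left, e1]; ring
  have hcs : Summable (smF f A lm ε (f y) ((A y).val u)) := by
    apply (summable_nat_add_iff 1).mp
    have : (fun n : ℕ => smF f A lm ε (f y) ((A y).val u) (n + 1))
        = fun n : ℕ => Real.exp (lm - ε) * smF f A lm ε y u n :=
      funext (smF_step_succ f A lm ε y u)
    rw [this]
    exact h2.mul_left _
  have hm : ∑' n : ℕ, smF f A lm ε (f y) ((A y).val u) n
      = Real.exp (lm - ε) * ‖u‖ + Real.exp (lm - ε) * ∑' n, smF f A lm ε y u n := by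
    rw [Summable.tsum_eq_zero_add hcs, smF_step_zero,
      tsum_congr (smF_step_succ f A lm ε y u), tsum_mul_left]
  rw [lyapNorm_eq, lyapNorm_eq, hp, hm]
  have hee : Real.exp (lm - ε) ≤ Real.exp (lp + ε) := Real.exp_le_exp.mpr (by linarith)
  have hSm : 0 ≤ ∑' n, smF f A lm ε y u n := tsum_nonneg (smF_nonneg f A lm ε y u)
  have hun : (0 : ℝ) ≤ ‖u‖ := norm_nonneg u
  nlinarith [mul_le_mul_of_nonneg_right hee hSm, mul_le_mul_of_nonneg_right hee hun]

lemma step_minus (f : X ≃ X) (A : X → (V →L[ℝ] V)ˣ) {lp lm ε : ℝ}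
    (hll : lm ≤ lp) (hε : 0 < ε) (y : X) (w : V)
    (h1 : Summable (spF f A lp ε (f y) w)) (h2 : Summable (smF f A lm ε (f y) w)) :
    lyapNorm f A lp lm ε y (((A y)⁻¹ : (V →L[ℝ] V)ˣ).val w)
      ≤ Real.exp (-lm + ε) * lyapNorm f A lp lm ε (f y) w := by
  have hds : Summable (spF f A lp ε y (((A y)⁻¹ : (V →L[ℝ] V)ˣ).val w)) := by
    apply (summable_nat_add_iff 1).mp
    have : (fun n : ℕ => spF f A lp ε y (((A y)⁻¹ : (V →L[ℝ] V)ˣ).val w) (n + 1))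
        = fun n : ℕ => Real.exp (-(lp + ε)) * spF f A lp ε (f y) w n :=
      funext (spF_inv_succ f A lp ε y w)
    rw [this]
    exact h1.mul_left _
  have hp : ∑' n : ℕ, spF f A lp ε y (((A y)⁻¹ : (V →L[ℝ] V)ˣ).val w) n
      = ‖((A y)⁻¹ : (V →L[ℝ] V)ˣ).val w‖
        + Real.exp (-(lp + ε)) * ∑' n, spF f A lp ε (f y) w n := by
    rw [Summable.tsum_eq_zero_add hds, spF_zero,
      tsum_congr (spF_inv_succ f A lp ε y w), tsum_mul_left]
  have e2 : ∑' n : ℕ, smF f A lm ε (f y) w (n + 1)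
      = (∑' n, smF f A lm ε (f y) w n) - ‖((A y)⁻¹ : (V →L[ℝ] V)ˣ).val w‖ * Real.exp (lm - ε) := by
    rw [Summable.tsum_eq_zero_add h2, smF_fy_zero]; ring
  have hm : ∑' n : ℕ, smF f A lm ε y (((A y)⁻¹ : (V →L[ℝ] V)ˣ).val w) n
      = Real.exp (-(lm - ε)) * (∑' n, smF f A lm ε (f y) w n)
        - ‖((A y)⁻¹ : (V →L[ℝ] V)ˣ).val w‖ := by
    rw [tsum_congr (smF_inv f A lm ε y w), tsum_mul_left, e2]
    have : Real.exp (-(lm - ε)) * Real.exp (lm - ε) = 1 := by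
      rw [← Real.exp_add]; norm_num
    linear_combination (-‖((A y)⁻¹ : (V →L[ℝ] V)ˣ).val w‖) * this
  rw [lyapNorm_eq, lyapNorm_eq, hp, hm]
  have hee : Real.exp (-(lp + ε)) ≤ Real.exp (-lm + ε) := Real.exp_le_exp.mpr (by linarith)
  have heq : Real.exp (-(lm - ε)) = Real.exp (-lm + ε) := by ring_nf
  have hSp : 0 ≤ ∑' n, spF f A lp ε (f y) w n := tsum_nonneg (spF_nonneg f A lp ε (f y) w)
  rw [heq]
  nlinarith [mul_le_mul_of_nonneg_right hee hSp]

end steps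

/-- basic properties of the Lyapunov norm `N_y` for a `GL(V)`-valued cocycle
over a bijection `f`, assuming both defining series converge at every point of the orbit
of `x`: it dominates the background norm, and it transforms under `A(x)`, `A(x)⁻¹` and the
iterates `A^n_x`, `(A^n_x)⁻¹` with factors `e^{λ₊+ε}`, `e^{−λ₋+ε}`, `e^{n(λ₊+ε)}`,
`e^{n(−λ₋+ε)}` respectively. -/
theorem lyapunov_norm_properties {X V : Type*} [NormedAddCommGroup V] [NormedSpace ℝ V]
    [CompleteSpace V] (f : X ≃ X) (A : X → (V →L[ℝ] V)ˣ)
    (lp lm ε : ℝ) (hll : lm ≤ lp) (hε : 0 < ε) (x : X)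
    (hsum : ∀ y : X, (∃ n : ℕ, y = (⇑f)^[n] x ∨ y = (⇑f.symm)^[n] x) → ∀ u : V,
      Summable (fun n : ℕ => ‖(cocycle (⇑f) A n y).val u‖ * Real.exp (-(lp + ε) * (n : ℝ))) ∧
      Summable (fun n : ℕ =>
        ‖((cocycle (⇑f) A (n + 1) ((⇑f.symm)^[n + 1] y))⁻¹ : (V →L[ℝ] V)ˣ).val u‖ *
          Real.exp ((lm - ε) * ((n : ℝ) + 1)))) :
    (∀ y : X, (∃ n : ℕ, y = (⇑f)^[n] x ∨ y = (⇑f.symm)^[n] x) → ∀ u : V,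
      ‖u‖ ≤ lyapNorm f A lp lm ε y u) ∧
    (∀ u : V, lyapNorm f A lp lm ε (f x) ((A x).val u) ≤
      Real.exp (lp + ε) * lyapNorm f A lp lm ε x u) ∧
    (∀ w : V, lyapNorm f A lp lm ε x (((A x)⁻¹ : (V →L[ℝ] V)ˣ).val w) ≤
      Real.exp (-lm + ε) * lyapNorm f A lp lm ε (f x) w) ∧
    (∀ n : ℕ, 1 ≤ n → ∀ u : V,
      lyapNorm f A lp lm ε ((⇑f)^[n] x) ((cocycle (⇑f) A n x).val u) ≤
        Real.exp ((n : ℝ) * (lp + ε)) * lyapNorm f A lp lm ε x u) ∧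
    (∀ n : ℕ, 1 ≤ n → ∀ w : V,
      lyapNorm f A lp lm ε x (((cocycle (⇑f) A n x)⁻¹ : (V →L[ℝ] V)ˣ).val w) ≤
        Real.exp ((n : ℝ) * (-lm + ε)) * lyapNorm f A lp lm ε ((⇑f)^[n] x) w) := by
  have hmem : ∀ n : ℕ, (∃ m : ℕ, (⇑f)^[n] x = (⇑f)^[m] x ∨ (⇑f)^[n] x = (⇑f.symm)^[m] x) :=
    fun n => ⟨n, Or.inl rfl⟩
  have hsp : ∀ (n : ℕ) (u : V), Summable (spF f A lp ε ((⇑f)^[n] x) u) :=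
    fun n u => (hsum _ (hmem n) u).1
  have hsm : ∀ (n : ℕ) (u : V), Summable (smF f A lm ε ((⇑f)^[n] x) u) :=
    fun n u => (hsum _ (hmem n) u).2
  have hx0 : ((⇑f)^[0] x) = x := rfl
  have key1 : ∀ (n : ℕ) (u : V),
      lyapNorm f A lp lm ε ((⇑f)^[n] x) ((cocycle (⇑f) A n x).val u) ≤
        Real.exp ((n : ℝ) * (lp + ε)) * lyapNorm f A lp lm ε x u := by
    intro n
    induction n with
    | zero => intro u; simp [cocycle]
    | succ n ih =>
        intro u
        have hform : (cocycle (⇑f) A (n + 1) x).val u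
            = (A ((⇑f)^[n] x)).val ((cocycle (⇑f) A n x).val u) := by
          rw [cocycle_succ', Units.val_mul, ContinuousLinearMap.mul_apply]
        have hit : (⇑f)^[n + 1] x = f ((⇑f)^[n] x) := Function.iterate_succ_apply' _ _ _
        rw [hform, hit]
        calc lyapNorm f A lp lm ε (f ((⇑f)^[n] x))
              ((A ((⇑f)^[n] x)).val ((cocycle (⇑f) A n x).val u))
            ≤ Real.exp (lp + ε) * lyapNorm f A lp lm ε ((⇑f)^[n] x) ((cocycle (⇑f) A n x).val u) :=
              step_plus f A hll hε _ _ (hsp n _) (hsm n _)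
          _ ≤ Real.exp (lp + ε) * (Real.exp ((n : ℝ) * (lp + ε)) * lyapNorm f A lp lm ε x u) :=
              mul_le_mul_of_nonneg_left (ih u) (Real.exp_pos _).le
          _ = Real.exp (((n : ℕ) + 1 : ℕ) * (lp + ε)) * lyapNorm f A lp lm ε x u := by
              rw [← mul_assoc, ← Real.exp_add]
              congr 1
              push_cast
              ring
  have key2 : ∀ (n : ℕ) (w : V),
      lyapNorm f A lp lm ε x (((cocycle (⇑f) A n x)⁻¹ : (V →L[ℝ] V)ˣ).val w) ≤
        Real.exp ((n : ℝ) * (-lm + ε)) * lyapNorm f A lp lm ε ((⇑f)^[n] x) w := by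
    intro n
    induction n with
    | zero => intro w; simp [cocycle]
    | succ n ih =>
        intro w
        have hform : ((cocycle (⇑f) A (n + 1) x)⁻¹ : (V →L[ℝ] V)ˣ).val w
            = ((cocycle (⇑f) A n x)⁻¹ : (V →L[ℝ] V)ˣ).val
                (((A ((⇑f)^[n] x))⁻¹ : (V →L[ℝ] V)ˣ).val w) := by
          rw [cocycle_succ', mul_inv_rev, Units.val_mul, ContinuousLinearMap.mul_apply]
        have hit : (⇑f)^[n + 1] x = f ((⇑f)^[n] x) := Function.iterate_succ_apply' _ _ _
        rw [hform, hit]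
        have hstep : lyapNorm f A lp lm ε ((⇑f)^[n] x)
              (((A ((⇑f)^[n] x))⁻¹ : (V →L[ℝ] V)ˣ).val w)
            ≤ Real.exp (-lm + ε) * lyapNorm f A lp lm ε (f ((⇑f)^[n] x)) w := by
          apply step_minus f A hll hε
          · have := hsp (n + 1) w; rwa [hit] at this
          · have := hsm (n + 1) w; rwa [hit] at this
        calc lyapNorm f A lp lm ε x
              (((cocycle (⇑f) A n x)⁻¹ : (V →L[ℝ] V)ˣ).val
                (((A ((⇑f)^[n] x))⁻¹ : (V →L[ℝ] V)ˣ).val w))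
            ≤ Real.exp ((n : ℝ) * (-lm + ε)) * lyapNorm f A lp lm ε ((⇑f)^[n] x)
                (((A ((⇑f)^[n] x))⁻¹ : (V →L[ℝ] V)ˣ).val w) := ih _
          _ ≤ Real.exp ((n : ℝ) * (-lm + ε)) *
                (Real.exp (-lm + ε) * lyapNorm f A lp lm ε (f ((⇑f)^[n] x)) w) :=
              mul_le_mul_of_nonneg_left hstep (Real.exp_pos _).le
          _ = Real.exp (((n : ℕ) + 1 : ℕ) * (-lm + ε)) *
                lyapNorm f A lp lm ε (f ((⇑f)^[n] x)) w := by
              rw [← mul_assoc, ← Real.exp_add]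
              congr 1
              push_cast
              ring
  refine ⟨fun y hy u => lyap_lower f A lp lm ε y u (hsum y hy u).1,
    fun u => step_plus f A hll hε x u (hsum x ⟨0, Or.inl rfl⟩ u).1 (hsum x ⟨0, Or.inl rfl⟩ u).2,
    fun w => step_minus f A hll hε x w ?_ ?_,
    fun n _ u => key1 n u, fun n _ w => key2 n w⟩
  · have := hsp 1 w; rwa [show (⇑f)^[1] x = f x from Function.iterate_one ⇑f ▸ rfl] at this
  · have := hsm 1 w; rwa [show (⇑f)^[1] x = f x from Function.iterate_one ⇑f ▸ rfl] at this
end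

section
/- Let H and H' be real inner product spaces with orthogonal direct sum decompositions H = E₁ ⊕ E₂ and H' = F₁ ⊕ F₂ (E₂ = E₁^⊥, F₂ = F₁^⊥). Let B : H → H' be a bounded linear map with B(E₁) ⊆ F₁ and B(E₂) ⊆ F₂, and suppose for reals λ ≥ λ' and ε > 0: ‖Bu₁‖ ≥ e^{λ−ε}‖u₁‖ for all u₁ ∈ E₁, ‖Bu₂‖ ≤ e^{λ'+ε}‖u₂‖ for all u₂ ∈ E₂, and ‖Bu‖ ≤ e^{λ+ε}‖u‖ for all u ∈ H. Let Δ : H' → H' be a bounded linear map with ‖Δ‖ ≤ η and set T = (Id + Δ) ∘ B. Then for every u ∈ H with ‖u₂‖ ≤ ‖u₁‖ (where u = u₁ + u₂, u₁ ∈ E₁, u₂ ∈ E₂), writing Tu = w₁ + w₂ with w₁ ∈ F₁, w₂ ∈ F₂, one has ‖w₁‖ ≥ (e^{λ−ε} − √2·η·e^{λ+ε})·‖u₁‖ and ‖w₂‖ ≤ (e^{λ'+ε} + √2·η·e^{λ+ε})·‖u₁‖. -/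
open scoped RealInnerProductSpace

private lemma norm_le_of_orth {H : Type*} [NormedAddCommGroup H] [InnerProductSpace ℝ H]
    (F : Submodule ℝ H) {a b : H} (ha : a ∈ F) (hb : b ∈ Fᗮ) :
    ‖a‖ ≤ ‖a + b‖ ∧ ‖b‖ ≤ ‖a + b‖ := by
  have hab : @inner ℝ _ _ a b = 0 := Submodule.inner_right_of_mem_orthogonal ha hb
  have hsq : ‖a + b‖ ^ 2 = ‖a‖ ^ 2 + ‖b‖ ^ 2 := by
    rw [norm_add_pow_two_real, hab]; ring
  constructor
  · have h : ‖a‖ ^ 2 ≤ ‖a + b‖ ^ 2 := by nlinarith [sq_nonneg ‖b‖]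
    exact (abs_le_of_sq_le_sq' h (norm_nonneg _)).2
  · have h : ‖b‖ ^ 2 ≤ ‖a + b‖ ^ 2 := by nlinarith [sq_nonneg ‖a‖]
    exact (abs_le_of_sq_le_sq' h (norm_nonneg _)).2

/-- cone estimates for a perturbation `T = (Id + Δ) ∘ B` of a bounded map `B`
respecting orthogonal splittings `H = E₁ ⊕ E₁ᗮ`, `H' = F₁ ⊕ F₁ᗮ`. -/
theorem cone_estimates_perturbation {H H' : Type*}
    [NormedAddCommGroup H] [InnerProductSpace ℝ H]
    [NormedAddCommGroup H'] [InnerProductSpace ℝ H']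
    (E₁ : Submodule ℝ H) (F₁ : Submodule ℝ H')
    (B : H →L[ℝ] H') (hBE₁ : ∀ u ∈ E₁, B u ∈ F₁) (hBE₂ : ∀ u ∈ E₁ᗮ, B u ∈ F₁ᗮ)
    (lam lam' ε : ℝ) (hll : lam' ≤ lam) (hε : 0 < ε)
    (hB1 : ∀ u ∈ E₁, Real.exp (lam - ε) * ‖u‖ ≤ ‖B u‖)
    (hB2 : ∀ u ∈ E₁ᗮ, ‖B u‖ ≤ Real.exp (lam' + ε) * ‖u‖)
    (hB : ∀ u : H, ‖B u‖ ≤ Real.exp (lam + ε) * ‖u‖)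
    (Δ : H' →L[ℝ] H') (η : ℝ) (hΔ : ‖Δ‖ ≤ η) :
    ∀ u₁ ∈ E₁, ∀ u₂ ∈ E₁ᗮ, ‖u₂‖ ≤ ‖u₁‖ →
      ∀ w₁ ∈ F₁, ∀ w₂ ∈ F₁ᗮ,
        ((ContinuousLinearMap.id ℝ H' + Δ).comp B) (u₁ + u₂) = w₁ + w₂ →
        (Real.exp (lam - ε) - Real.sqrt 2 * η * Real.exp (lam + ε)) * ‖u₁‖ ≤ ‖w₁‖ ∧
        ‖w₂‖ ≤ (Real.exp (lam' + ε) + Real.sqrt 2 * η * Real.exp (lam + ε)) * ‖u₁‖ := by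
  intro u₁ hu₁ u₂ hu₂ hcone w₁ hw₁ w₂ hw₂ hT
  have hη : 0 ≤ η := (norm_nonneg Δ).trans hΔ
  set d := Δ (B (u₁ + u₂)) with hd
  have hTeq : B u₁ + B u₂ + d = w₁ + w₂ := by
    have h := hT
    simp only [ContinuousLinearMap.comp_apply, ContinuousLinearMap.add_apply,
      ContinuousLinearMap.id_apply] at h
    rw [← h, hd, map_add]
  -- decomposition of d
  have ha : w₁ - B u₁ ∈ F₁ := F₁.sub_mem hw₁ (hBE₁ u₁ hu₁)
  have hb : w₂ - B u₂ ∈ F₁ᗮ := F₁ᗮ.sub_mem hw₂ (hBE₂ u₂ hu₂)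
  have hdE : (w₁ - B u₁) + (w₂ - B u₂) = d := by
    have h : d = w₁ + w₂ - (B u₁ + B u₂) := by
      rw [eq_sub_iff_add_eq, add_comm]; exact hTeq
    rw [h]; abel
  -- norm of u bound
  have huu : ‖u₁ + u₂‖ ≤ Real.sqrt 2 * ‖u₁‖ := by
    have h12 : @inner ℝ _ _ u₁ u₂ = 0 := Submodule.inner_right_of_mem_orthogonal hu₁ hu₂
    have hsq : ‖u₁ + u₂‖ ^ 2 = ‖u₁‖ ^ 2 + ‖u₂‖ ^ 2 := by
      rw [norm_add_pow_two_real, h12]; ring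
    have h2 : ‖u₁ + u₂‖ ^ 2 ≤ (Real.sqrt 2 * ‖u₁‖) ^ 2 := by
      rw [mul_pow, Real.sq_sqrt (by norm_num : (2:ℝ) ≥ 0)]
      nlinarith [norm_nonneg u₂, norm_nonneg u₁]
    exact (abs_le_of_sq_le_sq' h2
      (mul_nonneg (Real.sqrt_nonneg _) (norm_nonneg _))).2
  have hdnorm : ‖d‖ ≤ Real.sqrt 2 * η * Real.exp (lam + ε) * ‖u₁‖ := by
    calc ‖d‖ ≤ ‖Δ‖ * ‖B (u₁ + u₂)‖ := Δ.le_opNorm _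
      _ ≤ η * (Real.exp (lam + ε) * ‖u₁ + u₂‖) := by
          apply mul_le_mul hΔ (hB _) (norm_nonneg _) hη
      _ ≤ η * (Real.exp (lam + ε) * (Real.sqrt 2 * ‖u₁‖)) := by
          apply mul_le_mul_of_nonneg_left _ hη
          exact mul_le_mul_of_nonneg_left huu (Real.exp_nonneg _)
      _ = Real.sqrt 2 * η * Real.exp (lam + ε) * ‖u₁‖ := by ring
  have hcomp := norm_le_of_orth F₁ ha hb
  rw [hdE] at hcomp
  have hd1 : ‖w₁ - B u₁‖ ≤ Real.sqrt 2 * η * Real.exp (lam + ε) * ‖u₁‖ :=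
    hcomp.1.trans hdnorm
  have hd2 : ‖w₂ - B u₂‖ ≤ Real.sqrt 2 * η * Real.exp (lam + ε) * ‖u₁‖ :=
    hcomp.2.trans hdnorm
  constructor
  · have h1 : ‖B u₁‖ - ‖w₁ - B u₁‖ ≤ ‖w₁‖ := by
      have : ‖B u₁‖ ≤ ‖w₁‖ + ‖w₁ - B u₁‖ := by
        calc ‖B u₁‖ = ‖w₁ - (w₁ - B u₁)‖ := by congr 1; abel
          _ ≤ ‖w₁‖ + ‖w₁ - B u₁‖ := norm_sub_le _ _
      linarith
    have := hB1 u₁ hu₁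
    nlinarith [hd1]
  · have h2 : ‖w₂‖ ≤ ‖B u₂‖ + ‖w₂ - B u₂‖ := by
      calc ‖w₂‖ = ‖B u₂ + (w₂ - B u₂)‖ := by congr 1; abel
        _ ≤ ‖B u₂‖ + ‖w₂ - B u₂‖ := norm_add_le _ _
    have hb2 := hB2 u₂ hu₂
    have : Real.exp (lam' + ε) * ‖u₂‖ ≤ Real.exp (lam' + ε) * ‖u₁‖ :=
      mul_le_mul_of_nonneg_left hcone (Real.exp_nonneg _)
    nlinarith [hd2]
end

section
/- Let H be a real inner product space with an orthogonal decomposition H = E₁ ⊕ E₂ and associated cone K = {u : ‖u₂‖ ≤ ‖u₁‖}, where u = u₁ + u₂ with u₁ ∈ E₁, u₂ ∈ E₂. Let T : H → H be a bounded linear map with T(K) ⊆ K and suppose there is ρ > 0 with ‖(Tu)₁‖ ≥ ρ·‖u₁‖ for every u ∈ K. Then for every u ∈ K and every n ∈ ℕ one has ‖Tⁿu‖ ≥ ρⁿ·‖u‖/√2; in particular, if K contains a nonzero vector, then liminf_{n→∞} (1/n)·log‖Tⁿ‖ ≥ log ρ. -/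
open Filter

/-- if `T` preserves the cone `K = {‖u₂‖ ≤ ‖u₁‖}` of an orthogonal
decomposition `H = E₁ ⊕ E₁ᗮ` and expands first components by a factor `ρ > 0`, then
`‖Tⁿu‖ ≥ ρⁿ‖u‖/√2` on `K`, and if `K` contains a nonzero vector then
`liminf (1/n)·log‖Tⁿ‖ ≥ log ρ`. -/
theorem cone_iterate_lower_estimate {H : Type*} [NormedAddCommGroup H]
    [InnerProductSpace ℝ H] (E₁ : Submodule ℝ H) (T : H →L[ℝ] H)
    (K : Set H) (hK : K = {u : H | ∃ u₁ ∈ E₁, ∃ u₂ ∈ E₁ᗮ, u = u₁ + u₂ ∧ ‖u₂‖ ≤ ‖u₁‖})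
    (hTK : Set.MapsTo T K K) (ρ : ℝ) (hρ : 0 < ρ)
    (hgrow : ∀ u₁ ∈ E₁, ∀ u₂ ∈ E₁ᗮ, ‖u₂‖ ≤ ‖u₁‖ →
      ∀ w₁ ∈ E₁, ∀ w₂ ∈ E₁ᗮ, T (u₁ + u₂) = w₁ + w₂ → ρ * ‖u₁‖ ≤ ‖w₁‖) :
    (∀ u ∈ K, ∀ n : ℕ, ρ ^ n * ‖u‖ / Real.sqrt 2 ≤ ‖(T ^ n) u‖) ∧
    ((∃ u ∈ K, u ≠ 0) →
      Real.log ρ ≤ liminf (fun n : ℕ => (n : ℝ)⁻¹ * Real.log ‖T ^ n‖) atTop) := by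
  have keynorm : ∀ v₁ ∈ E₁, ∀ v₂ ∈ E₁ᗮ, ‖v₁ + v₂‖ ^ 2 = ‖v₁‖ ^ 2 + ‖v₂‖ ^ 2 := by
    intro v₁ h1 v₂ h2
    have := norm_add_sq_eq_norm_sq_add_norm_sq_real
      (Submodule.inner_right_of_mem_orthogonal h1 h2)
    nlinarith [this]
  have hs2 : (0:ℝ) < Real.sqrt 2 := by positivity
  have hs2sq : Real.sqrt 2 ^ 2 = 2 := Real.sq_sqrt (by norm_num)
  have main : ∀ u₁ ∈ E₁, ∀ u₂ ∈ E₁ᗮ, ‖u₂‖ ≤ ‖u₁‖ → ∀ n : ℕ,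
      ∃ v₁ ∈ E₁, ∃ v₂ ∈ E₁ᗮ, (T ^ n) (u₁ + u₂) = v₁ + v₂ ∧ ‖v₂‖ ≤ ‖v₁‖ ∧
        ρ ^ n * ‖u₁‖ ≤ ‖v₁‖ := by
    intro u₁ h1 u₂ h2 hle n
    induction n with
    | zero => exact ⟨u₁, h1, u₂, h2, by simp, hle, by simp⟩
    | succ n ih =>
      obtain ⟨v₁, hv1, v₂, hv2, hv, hvle, hvg⟩ := ih
      have hmem : (T ^ n) (u₁ + u₂) ∈ K := by
        rw [hK]; exact ⟨v₁, hv1, v₂, hv2, hv, hvle⟩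
      have hTm := hTK hmem
      rw [hK] at hTm
      obtain ⟨w₁, hw1, w₂, hw2, hw, hwle⟩ := hTm
      refine ⟨w₁, hw1, w₂, hw2, ?_, hwle, ?_⟩
      · rw [pow_succ', ContinuousLinearMap.mul_apply, hw]
      · have hg := hgrow v₁ hv1 v₂ hv2 hvle w₁ hw1 w₂ hw2 (by rw [← hv]; exact hw)
        have hρn : (0:ℝ) ≤ ρ ^ n * ‖u₁‖ := by positivity
        calc ρ ^ (n+1) * ‖u₁‖ = ρ * (ρ ^ n * ‖u₁‖) := by ring
          _ ≤ ρ * ‖v₁‖ := by nlinarith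
          _ ≤ ‖w₁‖ := hg
  have part1 : ∀ u ∈ K, ∀ n : ℕ, ρ ^ n * ‖u‖ / Real.sqrt 2 ≤ ‖(T ^ n) u‖ := by
    intro u hu n
    rw [hK] at hu
    obtain ⟨u₁, h1, u₂, h2, hu, hle⟩ := hu
    obtain ⟨v₁, hv1, v₂, hv2, hv, hvle, hvg⟩ := main u₁ h1 u₂ h2 hle n
    have hA : ‖v₁‖ ≤ ‖v₁ + v₂‖ := by
      nlinarith [keynorm v₁ hv1 v₂ hv2, norm_nonneg v₁, norm_nonneg v₂,
        norm_nonneg (v₁ + v₂)]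
    have hB : ‖u₁ + u₂‖ ≤ Real.sqrt 2 * ‖u₁‖ := by
      have hsq : ‖u₁ + u₂‖ ^ 2 ≤ (Real.sqrt 2 * ‖u₁‖) ^ 2 := by
        rw [mul_pow, hs2sq]
        nlinarith [keynorm u₁ h1 u₂ h2, hle, norm_nonneg u₁, norm_nonneg u₂]
      have := Real.sqrt_le_sqrt hsq
      rwa [Real.sqrt_sq (norm_nonneg _), Real.sqrt_sq (by positivity)] at this
    rw [hu, hv, div_le_iff₀ hs2]
    calc ρ ^ n * ‖u₁ + u₂‖ ≤ ρ ^ n * (Real.sqrt 2 * ‖u₁‖) :=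
          mul_le_mul_of_nonneg_left hB (pow_pos hρ n).le
      _ = (ρ ^ n * ‖u₁‖) * Real.sqrt 2 := by ring
      _ ≤ ‖v₁ + v₂‖ * Real.sqrt 2 :=
          mul_le_mul_of_nonneg_right (hvg.trans hA) hs2.le
  refine ⟨part1, ?_⟩
  rintro ⟨u, hu, hune⟩
  have hunorm : (0:ℝ) < ‖u‖ := norm_pos_iff.2 hune
  have hopbound : ∀ n : ℕ, ρ ^ n / Real.sqrt 2 ≤ ‖T ^ n‖ := by
    intro n
    have h1 := part1 u hu n
    have h2 : ‖(T ^ n) u‖ ≤ ‖T ^ n‖ * ‖u‖ := (T ^ n).le_opNorm u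
    rw [div_le_iff₀ hs2]
    have h3 : ρ ^ n * ‖u‖ / Real.sqrt 2 ≤ ‖T ^ n‖ * ‖u‖ := le_trans h1 h2
    rw [div_le_iff₀ hs2] at h3
    have : ρ ^ n * ‖u‖ ≤ (‖T ^ n‖ * Real.sqrt 2) * ‖u‖ := by nlinarith
    exact le_of_mul_le_mul_right this hunorm
  have hTnpos : ∀ n : ℕ, (0:ℝ) < ‖T ^ n‖ := fun n =>
    lt_of_lt_of_le (by positivity) (hopbound n)
  set c := Real.log (Real.sqrt 2) with hc
  have hglog : ∀ n : ℕ, 1 ≤ n →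
      Real.log ρ - (n : ℝ)⁻¹ * c ≤ (n : ℝ)⁻¹ * Real.log ‖T ^ n‖ := by
    intro n hn
    have hnpos : (0:ℝ) < n := by exact_mod_cast hn
    have hlog : n * Real.log ρ - c ≤ Real.log ‖T ^ n‖ := by
      have h1 : Real.log (ρ ^ n / Real.sqrt 2) ≤ Real.log ‖T ^ n‖ :=
        Real.log_le_log (by positivity) (hopbound n)
      rwa [Real.log_div (by positivity) (by positivity), Real.log_pow] at h1
    have := mul_le_mul_of_nonneg_left hlog (by positivity : (0:ℝ) ≤ (n:ℝ)⁻¹)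
    calc Real.log ρ - (n : ℝ)⁻¹ * c
        = (n : ℝ)⁻¹ * ((n : ℝ) * Real.log ρ - c) := by field_simp
      _ ≤ (n : ℝ)⁻¹ * Real.log ‖T ^ n‖ := this
  have htend : Tendsto (fun n : ℕ => Real.log ρ - (n : ℝ)⁻¹ * c) atTop
      (nhds (Real.log ρ)) := by
    have h0 : Tendsto (fun n : ℕ => ((n : ℝ))⁻¹) atTop (nhds 0) :=
      tendsto_inv_atTop_nhds_zero_nat
    have := (h0.mul_const c).const_sub (Real.log ρ)
    simpa using this
  have hliminfg : liminf (fun n : ℕ => Real.log ρ - (n : ℝ)⁻¹ * c) atTop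
      = Real.log ρ := htend.liminf_eq
  have hub : ∀ᶠ n : ℕ in atTop, (n : ℝ)⁻¹ * Real.log ‖T ^ n‖ ≤ Real.log ‖T‖ := by
    filter_upwards [eventually_ge_atTop 1] with n hn
    have hnpos : (0:ℝ) < n := by exact_mod_cast hn
    have hpow : ‖T ^ n‖ ≤ ‖T‖ ^ n := norm_pow_le' T hn
    have hlog : Real.log ‖T ^ n‖ ≤ (n : ℝ) * Real.log ‖T‖ := by
      have := Real.log_le_log (hTnpos n) hpow
      rwa [Real.log_pow] at this
    have := mul_le_mul_of_nonneg_left hlog (by positivity : (0:ℝ) ≤ (n:ℝ)⁻¹)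
    calc (n : ℝ)⁻¹ * Real.log ‖T ^ n‖ ≤ (n : ℝ)⁻¹ * ((n : ℝ) * Real.log ‖T‖) := this
      _ = Real.log ‖T‖ := by field_simp
  rw [← hliminfg]
  refine liminf_le_liminf ?_ htend.isBoundedUnder_ge
    (isCoboundedUnder_ge_of_eventually_le atTop hub)
  filter_upwards [eventually_ge_atTop 1] with n hn using hglog n hn
end
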